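/- arXiv:2111.00072 — 3 statements merged into one kernel-verified Lean document; each statement's English description precedes it below -/
import Mathlib

section
/- Performance difference identity: for any two policies π and π_k on a finite MDP, J(π) - J(π_k) = (1/(1-γ)) E_{s ∼ d^π} E_{a ∼ π(·|s)}[A^{π_k}(s,a)]. -/
set_option maxHeartbeats 1000000


open scoped BigOperators

/-- A finite Markov decision process. -/
structure MDP (S A : Type*) [Fintype S] [Fintype A] where
  p : S → A → S → ℝ
  p_nonneg : ∀ s a s', 0 ≤ p s a s'
  p_sum : ∀ s a, ∑ s', p s a s' = 1
  r : S → A → ℝ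
  ρ0 : S → ℝ
  ρ0_nonneg : ∀ s, 0 ≤ ρ0 s
  ρ0_sum : ∑ s, ρ0 s = 1
  γ : ℝ
  γ_pos : 0 < γ
  γ_lt_one : γ < 1

variable {S A : Type*} [Fintype S] [Fintype A]

/-- A (stationary stochastic) policy: a probability distribution over actions at every state. -/
noncomputable def IsPolicy (π : S → A → ℝ) : Prop :=
  (∀ s a, 0 ≤ π s a) ∧ ∀ s, ∑ a, π s a = 1

/-- The state occupancy distribution at time `t`, starting from initial distribution `μ`. -/
noncomputable def stateDistFrom (M : MDP S A) (π : S → A → ℝ) (μ : S → ℝ) : ℕ → S → ℝ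
  | 0 => μ
  | t + 1 => fun s' => ∑ s, ∑ a, stateDistFrom M π μ t s * π s a * M.p s a s'

/-- The normalized discounted state visitation distribution, starting from `μ`. -/
noncomputable def visitFrom (M : MDP S A) (π : S → A → ℝ) (μ : S → ℝ) (s : S) : ℝ :=
  (1 - M.γ) * ∑' t, M.γ ^ t * stateDistFrom M π μ t s

/-- The normalized discounted state visitation distribution `d^π`. -/
noncomputable def visit (M : MDP S A) (π : S → A → ℝ) (s : S) : ℝ :=
  visitFrom M π M.ρ0 s

/-- Expected total discounted reward starting from initial distribution `μ`. -/
noncomputable def Jfrom (M : MDP S A) (π : S → A → ℝ) (μ : S → ℝ) : ℝ :=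
  ∑' t, M.γ ^ t * ∑ s, ∑ a, stateDistFrom M π μ t s * π s a * M.r s a

/-- The performance objective `J(π)`. -/
noncomputable def Jval (M : MDP S A) (π : S → A → ℝ) : ℝ :=
  Jfrom M π M.ρ0

/-- The state value function `V^π(s)`. -/
noncomputable def Vval [DecidableEq S] (M : MDP S A) (π : S → A → ℝ) (s : S) : ℝ :=
  Jfrom M π (fun s' => if s' = s then 1 else 0)

/-- The state-action value function `Q^π(s,a)`. -/
noncomputable def Qval [DecidableEq S] (M : MDP S A) (π : S → A → ℝ) (s : S) (a : A) : ℝ :=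
  M.r s a + M.γ * ∑ s', M.p s a s' * Vval M π s'

/-- The advantage function `A^π(s,a) = Q^π(s,a) - V^π(s)`. -/
noncomputable def Adv [DecidableEq S] (M : MDP S A) (π : S → A → ℝ) (s : S) (a : A) : ℝ :=
  Qval M π s a - Vval M π s

/-- Total variation distance between the action distributions of two policies at state `s`. -/
noncomputable def tvPol (π π' : S → A → ℝ) (s : S) : ℝ :=
  (1 / 2) * ∑ a, |π s a - π' s a|

/-! ### Auxiliary lemmas -/

lemma sd_succ (M : MDP S A) (π : S → A → ℝ) (μ : S → ℝ) (t : ℕ) (s' : S) :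
    stateDistFrom M π μ (t + 1) s'
      = ∑ s, ∑ a, stateDistFrom M π μ t s * π s a * M.p s a s' := rfl

lemma sd_nonneg (M : MDP S A) (π : S → A → ℝ) (hπ : ∀ s a, 0 ≤ π s a)
    (μ : S → ℝ) (hμ : ∀ s, 0 ≤ μ s) : ∀ t s, 0 ≤ stateDistFrom M π μ t s := by
  intro t
  induction t with
  | zero => exact hμ
  | succ t ih =>
    intro s'
    apply Finset.sum_nonneg; intro s _
    apply Finset.sum_nonneg; intro a _
    have h1 := M.p_nonneg s a s'
    have h2 := hπ s a
    have h3 := ih s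
    positivity

lemma sd_sum (M : MDP S A) (π : S → A → ℝ) (hπ : ∀ s, ∑ a, π s a = 1)
    (μ : S → ℝ) : ∀ t, ∑ s, stateDistFrom M π μ t s = ∑ s, μ s := by
  intro t
  induction t with
  | zero => rfl
  | succ t ih =>
    show (∑ s', ∑ s, ∑ a, stateDistFrom M π μ t s * π s a * M.p s a s') = _
    rw [Finset.sum_comm]
    calc ∑ s, ∑ s', ∑ a, stateDistFrom M π μ t s * π s a * M.p s a s'
        = ∑ s, stateDistFrom M π μ t s := by
          refine Finset.sum_congr rfl fun s _ => ?_
          rw [Finset.sum_comm]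
          have h : ∀ a, ∑ s', stateDistFrom M π μ t s * π s a * M.p s a s'
              = stateDistFrom M π μ t s * π s a := by
            intro a; rw [← Finset.mul_sum, M.p_sum, mul_one]
          simp only [h]
          rw [← Finset.mul_sum, hπ s, mul_one]
      _ = ∑ s, μ s := ih

lemma sd_le_one (M : MDP S A) (π : S → A → ℝ) (hπ : IsPolicy π)
    (μ : S → ℝ) (hμ0 : ∀ s, 0 ≤ μ s) (hμ1 : ∑ s, μ s = 1) :
    ∀ t s, stateDistFrom M π μ t s ≤ 1 := by
  intro t s
  have h := sd_sum M π hπ.2 μ t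
  rw [hμ1] at h
  calc stateDistFrom M π μ t s ≤ ∑ s', stateDistFrom M π μ t s' :=
        Finset.single_le_sum (fun s' _ => sd_nonneg M π hπ.1 μ hμ0 t s') (Finset.mem_univ s)
    _ = 1 := h

lemma pol_le_one (π : S → A → ℝ) (hπ : IsPolicy π) (s : S) (a : A) : π s a ≤ 1 := by
  calc π s a ≤ ∑ a', π s a' :=
        Finset.single_le_sum (fun a' _ => hπ.1 s a') (Finset.mem_univ a)
    _ = 1 := hπ.2 s

lemma summable_geom_bound {γ : ℝ} (h0 : 0 ≤ γ) (h1 : γ < 1) {g : ℕ → ℝ} {C : ℝ}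
    (hg : ∀ t, |g t| ≤ C) : Summable (fun t => γ ^ t * g t) := by
  refine Summable.of_abs (Summable.of_nonneg_of_le (fun t => abs_nonneg _) (fun t => ?_)
    ((summable_geometric_of_lt_one h0 h1).mul_right C))
  rw [abs_mul, abs_pow, abs_of_nonneg h0]
  exact mul_le_mul_of_nonneg_left (hg t) (by positivity)

/-- Bound for the reward-weighted sums appearing in `Jfrom`. -/
lemma weighted_abs_le (M : MDP S A) (π : S → A → ℝ) (hπ : IsPolicy π)
    (μ : S → ℝ) (hμ0 : ∀ s, 0 ≤ μ s) (hμ1 : ∑ s, μ s = 1) (c : S → A → ℝ) (t : ℕ) :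
    |∑ s, ∑ a, stateDistFrom M π μ t s * π s a * c s a| ≤ ∑ s, ∑ a, |c s a| := by
  calc |∑ s, ∑ a, stateDistFrom M π μ t s * π s a * c s a|
      ≤ ∑ s, |∑ a, stateDistFrom M π μ t s * π s a * c s a| :=
        Finset.abs_sum_le_sum_abs _ _
    _ ≤ ∑ s, ∑ a, |c s a| := by
        refine Finset.sum_le_sum fun s _ => ?_
        calc |∑ a, stateDistFrom M π μ t s * π s a * c s a|
            ≤ ∑ a, |stateDistFrom M π μ t s * π s a * c s a| :=
              Finset.abs_sum_le_sum_abs _ _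
          _ ≤ ∑ a, |c s a| := by
              refine Finset.sum_le_sum fun a _ => ?_
              rw [abs_mul, abs_mul]
              have hd0 := sd_nonneg M π hπ.1 μ hμ0 t s
              have hd1 := sd_le_one M π hπ μ hμ0 hμ1 t s
              have hp0 := hπ.1 s a
              have hp1 := pol_le_one π hπ s a
              rw [abs_of_nonneg hd0, abs_of_nonneg hp0]
              exact mul_le_of_le_one_left (abs_nonneg _) (mul_le_one₀ hd1 hp0 hp1)

/-- Bound for state-weighted sums. -/
lemma weighted_abs_le' (M : MDP S A) (π : S → A → ℝ) (hπ : IsPolicy π)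
    (μ : S → ℝ) (hμ0 : ∀ s, 0 ≤ μ s) (hμ1 : ∑ s, μ s = 1) (v : S → ℝ) (t : ℕ) :
    |∑ s, stateDistFrom M π μ t s * v s| ≤ ∑ s, |v s| := by
  calc |∑ s, stateDistFrom M π μ t s * v s|
      ≤ ∑ s, |stateDistFrom M π μ t s * v s| := Finset.abs_sum_le_sum_abs _ _
    _ ≤ ∑ s, |v s| := by
        refine Finset.sum_le_sum fun s _ => ?_
        rw [abs_mul, abs_of_nonneg (sd_nonneg M π hπ.1 μ hμ0 t s)]
        exact mul_le_of_le_one_left (abs_nonneg _) (sd_le_one M π hπ μ hμ0 hμ1 t s)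

/-- `stateDistFrom` is linear in the initial distribution. -/
lemma sd_linear [DecidableEq S] (M : MDP S A) (π : S → A → ℝ) (μ : S → ℝ) :
    ∀ t s, stateDistFrom M π μ t s
      = ∑ s0, μ s0 * stateDistFrom M π (fun s' => if s' = s0 then 1 else 0) t s := by
  intro t
  induction t with
  | zero =>
    intro s
    show μ s = ∑ s0, μ s0 * if s = s0 then 1 else 0
    simp [mul_ite, Finset.sum_ite_eq]
  | succ t ih =>
    intro s'
    show (∑ s, ∑ a, stateDistFrom M π μ t s * π s a * M.p s a s') = _
    calc ∑ s, ∑ a, stateDistFrom M π μ t s * π s a * M.p s a s'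
        = ∑ s, ∑ a, ∑ s0, μ s0 *
            (stateDistFrom M π (fun x => if x = s0 then 1 else 0) t s * π s a * M.p s a s') := by
          refine Finset.sum_congr rfl fun s _ => Finset.sum_congr rfl fun a _ => ?_
          rw [ih s, Finset.sum_mul, Finset.sum_mul]
          refine Finset.sum_congr rfl fun s0 _ => by ring
      _ = ∑ s, ∑ s0, ∑ a, μ s0 *
            (stateDistFrom M π (fun x => if x = s0 then 1 else 0) t s * π s a * M.p s a s') :=
          Finset.sum_congr rfl fun s _ => Finset.sum_comm
      _ = ∑ s0, ∑ s, ∑ a, μ s0 *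
            (stateDistFrom M π (fun x => if x = s0 then 1 else 0) t s * π s a * M.p s a s') :=
          Finset.sum_comm
      _ = ∑ s0, μ s0 * ∑ s, ∑ a,
            stateDistFrom M π (fun x => if x = s0 then 1 else 0) t s * π s a * M.p s a s' := by
          refine Finset.sum_congr rfl fun s0 _ => ?_
          rw [Finset.mul_sum]
          refine Finset.sum_congr rfl fun s _ => ?_
          rw [Finset.mul_sum]

/-- `Jfrom` is linear in the initial distribution: `Jfrom μ = ∑ μ(s) V(s)`. -/
lemma Jfrom_linear [DecidableEq S] (M : MDP S A) (π : S → A → ℝ) (hπ : IsPolicy π)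
    (μ : S → ℝ) :
    Jfrom M π μ = ∑ s0, μ s0 * Vval M π s0 := by
  have hek0 : ∀ s0 : S, ∀ s, (0:ℝ) ≤ if s = s0 then 1 else 0 := by
    intro s0 s; split <;> norm_num
  have hek1 : ∀ s0 : S, ∑ s, (if s = s0 then (1:ℝ) else 0) = 1 := by
    intro s0; simp [Finset.sum_ite_eq']
  have hsumm : ∀ s0 : S, Summable (fun t => M.γ ^ t * ∑ s, ∑ a,
      stateDistFrom M π (fun s' => if s' = s0 then 1 else 0) t s * π s a * M.r s a) := by
    intro s0
    exact summable_geom_bound M.γ_pos.le M.γ_lt_one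
      (fun t => weighted_abs_le M π hπ _ (hek0 s0) (hek1 s0) M.r t)
  have key : ∀ t, M.γ ^ t * (∑ s, ∑ a, stateDistFrom M π μ t s * π s a * M.r s a)
      = ∑ s0, μ s0 * (M.γ ^ t * ∑ s, ∑ a,
          stateDistFrom M π (fun s' => if s' = s0 then 1 else 0) t s * π s a * M.r s a) := by
    intro t
    have h : (∑ s, ∑ a, stateDistFrom M π μ t s * π s a * M.r s a)
        = ∑ s0, μ s0 * ∑ s, ∑ a,
            stateDistFrom M π (fun s' => if s' = s0 then 1 else 0) t s * π s a * M.r s a := by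
      calc ∑ s, ∑ a, stateDistFrom M π μ t s * π s a * M.r s a
          = ∑ s, ∑ a, ∑ s0, μ s0 *
              (stateDistFrom M π (fun x => if x = s0 then 1 else 0) t s * π s a * M.r s a) := by
            refine Finset.sum_congr rfl fun s _ => Finset.sum_congr rfl fun a _ => ?_
            rw [sd_linear M π μ t s, Finset.sum_mul, Finset.sum_mul]
            refine Finset.sum_congr rfl fun s0 _ => by ring
        _ = ∑ s, ∑ s0, ∑ a, μ s0 *
              (stateDistFrom M π (fun x => if x = s0 then 1 else 0) t s * π s a * M.r s a) :=
            Finset.sum_congr rfl fun s _ => Finset.sum_comm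
        _ = ∑ s0, ∑ s, ∑ a, μ s0 *
              (stateDistFrom M π (fun x => if x = s0 then 1 else 0) t s * π s a * M.r s a) :=
            Finset.sum_comm
        _ = ∑ s0, μ s0 * ∑ s, ∑ a,
              stateDistFrom M π (fun x => if x = s0 then 1 else 0) t s * π s a * M.r s a := by
            refine Finset.sum_congr rfl fun s0 _ => ?_
            rw [Finset.mul_sum]
            refine Finset.sum_congr rfl fun s _ => ?_
            rw [Finset.mul_sum]
    rw [h, Finset.mul_sum]
    refine Finset.sum_congr rfl fun s0 _ => by ring
  calc Jfrom M π μ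
      = ∑' t, ∑ s0, μ s0 * (M.γ ^ t * ∑ s, ∑ a,
          stateDistFrom M π (fun s' => if s' = s0 then 1 else 0) t s * π s a * M.r s a) :=
        tsum_congr key
    _ = ∑ s0, ∑' t, μ s0 * (M.γ ^ t * ∑ s, ∑ a,
          stateDistFrom M π (fun s' => if s' = s0 then 1 else 0) t s * π s a * M.r s a) := by
        refine Summable.tsum_finsetSum fun s0 _ => ?_
        exact (hsumm s0).mul_left (μ s0)
    _ = ∑ s0, μ s0 * Vval M π s0 := by
        refine Finset.sum_congr rfl fun s0 _ => ?_
        rw [tsum_mul_left]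
        rfl

/-- Performance difference identity:
`J(π) - J(π_k) = (1/(1-γ)) E_{s ∼ d^π} E_{a ∼ π(·|s)} [A^{π_k}(s,a)]`. -/
theorem performance_difference_identity [DecidableEq S]
    (M : MDP S A) (π πk : S → A → ℝ) (hπ : IsPolicy π) (hπk : IsPolicy πk) :
    Jval M π - Jval M πk
      = (1 / (1 - M.γ)) * ∑ s, visit M π s * ∑ a, π s a * Adv M πk s a := by
  classical
  set γ := M.γ with hγ
  have hγ0 : (0:ℝ) ≤ γ := M.γ_pos.le
  have hγ1 : γ < 1 := M.γ_lt_one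
  have hγne : (1 - γ) ≠ 0 := by linarith
  set d : ℕ → S → ℝ := stateDistFrom M π M.ρ0 with hd
  set Vk : S → ℝ := Vval M πk with hVk
  set g : ℕ → ℝ := fun t => ∑ s, ∑ a, d t s * π s a * M.r s a with hg
  set x : ℕ → ℝ := fun t => ∑ s, d t s * Vk s with hx
  set W : S → ℝ := fun s => ∑ a, π s a * Adv M πk s a with hW
  -- summability facts
  have hgb : ∀ t, |g t| ≤ ∑ s, ∑ a, |M.r s a| := fun t =>
    weighted_abs_le M π hπ M.ρ0 M.ρ0_nonneg M.ρ0_sum M.r t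
  have hxb : ∀ t, |x t| ≤ ∑ s, |Vk s| := fun t =>
    weighted_abs_le' M π hπ M.ρ0 M.ρ0_nonneg M.ρ0_sum Vk t
  have hsg : Summable (fun t => γ ^ t * g t) := summable_geom_bound hγ0 hγ1 hgb
  have hsx : Summable (fun t => γ ^ t * x t) := summable_geom_bound hγ0 hγ1 hxb
  have hsx' : Summable (fun t => γ ^ (t + 1) * x (t + 1)) :=
    (summable_nat_add_iff 1).2 hsx
  -- per-step identity : ∑_s d t s * W s = g t + γ * x (t+1) - x t
  have key2 : ∀ t, (∑ s, d t s * W s) = g t + γ * x (t + 1) - x t := by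
    intro t
    have hWs : ∀ s, W s = (∑ a, π s a * M.r s a)
        + γ * (∑ a, π s a * ∑ s', M.p s a s' * Vk s') - Vk s := by
      intro s
      rw [hW]
      simp only [Adv, Qval]
      calc ∑ a, π s a * (M.r s a + M.γ * ∑ s', M.p s a s' * Vval M πk s' - Vval M πk s)
          = ∑ a, (π s a * M.r s a
              + γ * (π s a * ∑ s', M.p s a s' * Vk s') - π s a * Vk s) := by
            refine Finset.sum_congr rfl fun a _ => by rw [hVk, hγ]; ring
        _ = (∑ a, π s a * M.r s a)
              + γ * (∑ a, π s a * ∑ s', M.p s a s' * Vk s') - (∑ a, π s a) * Vk s := by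
            rw [Finset.sum_sub_distrib, Finset.sum_add_distrib, Finset.mul_sum,
              Finset.sum_mul]
        _ = _ := by rw [hπ.2 s, one_mul]
    have hT : x (t + 1) = ∑ s, d t s * ∑ a, π s a * ∑ s', M.p s a s' * Vk s' := by
      rw [hx, hd]
      simp only [sd_succ]
      rw [← hd]
      calc ∑ s', (∑ s, ∑ a, d t s * π s a * M.p s a s') * Vk s'
          = ∑ s', ∑ s, ∑ a, d t s * π s a * M.p s a s' * Vk s' := by
            refine Finset.sum_congr rfl fun s' _ => ?_
            rw [Finset.sum_mul]
            refine Finset.sum_congr rfl fun s _ => Finset.sum_mul _ _ _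
        _ = ∑ s, ∑ s', ∑ a, d t s * π s a * M.p s a s' * Vk s' := by rw [Finset.sum_comm]
        _ = ∑ s, ∑ a, ∑ s', d t s * π s a * M.p s a s' * Vk s' := by
            exact Finset.sum_congr rfl fun s _ => by rw [Finset.sum_comm]
        _ = ∑ s, d t s * ∑ a, π s a * ∑ s', M.p s a s' * Vk s' := by
            refine Finset.sum_congr rfl fun s _ => ?_
            rw [Finset.mul_sum]
            refine Finset.sum_congr rfl fun a _ => ?_
            rw [Finset.mul_sum, Finset.mul_sum]
            refine Finset.sum_congr rfl fun s' _ => by ring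
    calc ∑ s, d t s * W s
        = ∑ s, (d t s * (∑ a, π s a * M.r s a)
            + γ * (d t s * ∑ a, π s a * ∑ s', M.p s a s' * Vk s') - d t s * Vk s) := by
          refine Finset.sum_congr rfl fun s _ => by rw [hWs s]; ring
      _ = (∑ s, d t s * (∑ a, π s a * M.r s a))
            + γ * (∑ s, d t s * ∑ a, π s a * ∑ s', M.p s a s' * Vk s') - ∑ s, d t s * Vk s := by
          rw [Finset.sum_sub_distrib, Finset.sum_add_distrib, Finset.mul_sum]
      _ = g t + γ * x (t + 1) - x t := by
          rw [hT, hg, hx]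
          congr 1
          congr 1
          refine Finset.sum_congr rfl fun s _ => ?_
          rw [Finset.mul_sum]
          refine Finset.sum_congr rfl fun a _ => by ring
  -- summability of the combined sequence
  have hxb' : ∀ t, |∑ s, d t s * W s| ≤ ∑ s, |W s| := fun t =>
    weighted_abs_le' M π hπ M.ρ0 M.ρ0_nonneg M.ρ0_sum W t
  have hsW : ∀ s : S, Summable (fun t => γ ^ t * (d t s * W s)) := by
    intro s
    apply summable_geom_bound hγ0 hγ1 (C := |W s|)
    intro t
    rw [abs_mul, abs_of_nonneg (sd_nonneg M π hπ.1 M.ρ0 M.ρ0_nonneg t s)]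
    exact mul_le_of_le_one_left (abs_nonneg _) (sd_le_one M π hπ M.ρ0 M.ρ0_nonneg M.ρ0_sum t s)
  -- step 1: rewrite RHS sum as (1-γ) * tsum
  have step1 : (∑ s, visit M π s * W s)
      = (1 - γ) * ∑' t, γ ^ t * ∑ s, d t s * W s := by
    calc ∑ s, visit M π s * W s
        = ∑ s, (1 - γ) * ∑' t, γ ^ t * (d t s * W s) := by
          refine Finset.sum_congr rfl fun s _ => ?_
          show (1 - γ) * (∑' t, γ ^ t * d t s) * W s = _
          rw [mul_assoc, ← tsum_mul_right]
          congr 1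
          exact tsum_congr fun t => by ring
      _ = (1 - γ) * ∑ s, ∑' t, γ ^ t * (d t s * W s) := by rw [Finset.mul_sum]
      _ = (1 - γ) * ∑' t, ∑ s, γ ^ t * (d t s * W s) := by
          rw [Summable.tsum_finsetSum fun s _ => hsW s]
      _ = (1 - γ) * ∑' t, γ ^ t * ∑ s, d t s * W s := by
          congr 1
          exact tsum_congr fun t => by rw [Finset.mul_sum]
  -- step 2: telescoping
  have tele : (∑' t, (γ ^ (t + 1) * x (t + 1) - γ ^ t * x t)) = -x 0 := by
    rw [Summable.tsum_sub hsx' hsx, Summable.tsum_eq_zero_add hsx]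
    simp
  have step2 : (∑' t, γ ^ t * ∑ s, d t s * W s)
      = (∑' t, γ ^ t * g t) - x 0 := by
    calc ∑' t, γ ^ t * ∑ s, d t s * W s
        = ∑' t, (γ ^ t * g t + (γ ^ (t + 1) * x (t + 1) - γ ^ t * x t)) := by
          refine tsum_congr fun t => ?_
          rw [key2 t, pow_succ]
          ring
      _ = (∑' t, γ ^ t * g t) + ∑' t, (γ ^ (t + 1) * x (t + 1) - γ ^ t * x t) :=
          Summable.tsum_add hsg (hsx'.sub hsx)
      _ = (∑' t, γ ^ t * g t) - x 0 := by rw [tele]; ring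
  -- identify pieces
  have hJπ : Jval M π = ∑' t, γ ^ t * g t := rfl
  have hJπk : Jval M πk = x 0 := by
    show Jfrom M πk M.ρ0 = x 0
    rw [Jfrom_linear M πk hπk M.ρ0]
    rfl
  rw [step1, step2, ← hJπ]
  rw [hJπk]
  field_simp
end

section
/- Generalized policy improvement lower bound relative to a reference policy: for a current policy π_k, reference policy π_ref, and future policy π (with supp π(·|s) ⊆ supp π_ref(·|s) for all s), J(π) - J(π_k) ≥ (1/(1-γ)) E_{(s,a) ∼ d^{π_ref}}[(π(a|s)/π_ref(a|s)) A^{π_k}(s,a)] - (2γ C^{π,π_k}/(1-γ)^2) E_{s ∼ d^{π_ref}}[TV(π, π_ref)(s)], where C^{π,π_k} = max_s |E_{a∼π(·|s)}[A^{π_k}(s,a)]|. -/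
open scoped BigOperators

variable {S A : Type*} [Fintype S] [Fintype A]

namespace PILB

variable {S A : Type*} [Fintype S] [Fintype A]

/-- A probability vector on states. -/
def IsProb (μ : S → ℝ) : Prop := (∀ s, 0 ≤ μ s) ∧ ∑ s, μ s = 1

lemma isProb_dirac [DecidableEq S] (s0 : S) : IsProb (fun s' => if s' = s0 then 1 else 0) := by
  constructor
  · intro s; dsimp only; split <;> norm_num
  · simp

/-- One-step pushforward of a state distribution. -/
noncomputable def push (M : MDP S A) (π : S → A → ℝ) (μ : S → ℝ) : S → ℝ :=
  fun s' => ∑ s, ∑ a, μ s * π s a * M.p s a s'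

lemma stateDistFrom_succ (M : MDP S A) (π : S → A → ℝ) (μ : S → ℝ) (t : ℕ) :
    stateDistFrom M π μ (t + 1) = push M π (stateDistFrom M π μ t) := rfl

lemma isProb_push (M : MDP S A) {π : S → A → ℝ} {μ : S → ℝ}
    (hπ : IsPolicy π) (hμ : IsProb μ) : IsProb (push M π μ) := by
  constructor
  · intro s'
    apply Finset.sum_nonneg; intro s _
    apply Finset.sum_nonneg; intro a _
    have := hμ.1 s; have := hπ.1 s a; have := M.p_nonneg s a s'
    positivity
  · unfold push
    rw [Finset.sum_comm]
    have : ∀ s ∈ Finset.univ (α := S),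
        ∑ s' : S, ∑ a, μ s * π s a * M.p s a s' = μ s := by
      intro s _
      rw [Finset.sum_comm]
      have : ∀ a ∈ Finset.univ (α := A), ∑ s', μ s * π s a * M.p s a s' = μ s * π s a := by
        intro a _
        rw [← Finset.mul_sum, M.p_sum, mul_one]
      rw [Finset.sum_congr rfl this, ← Finset.mul_sum, hπ.2, mul_one]
    rw [Finset.sum_congr rfl this, hμ.2]

lemma isProb_stateDistFrom (M : MDP S A) {π : S → A → ℝ} {μ : S → ℝ}
    (hπ : IsPolicy π) (hμ : IsProb μ) (t : ℕ) : IsProb (stateDistFrom M π μ t) := by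
  induction t with
  | zero => exact hμ
  | succ t ih => rw [stateDistFrom_succ]; exact isProb_push M hπ ih

lemma IsProb.le_one {μ : S → ℝ} (hμ : IsProb μ) (s : S) : μ s ≤ 1 := by
  calc μ s ≤ ∑ s', μ s' := Finset.single_le_sum (fun i _ => hμ.1 i) (Finset.mem_univ s)
  _ = 1 := hμ.2

lemma γ_nonneg (M : MDP S A) : 0 ≤ M.γ := le_of_lt M.γ_pos
lemma one_sub_γ_pos (M : MDP S A) : 0 < 1 - M.γ := by linarith [M.γ_lt_one]

/-- Summability of geometrically discounted bounded sequences. -/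
lemma summable_geom_bdd (M : MDP S A) {g : ℕ → ℝ} {C : ℝ} (h : ∀ t, |g t| ≤ C) :
    Summable (fun t => M.γ ^ t * g t) := by
  apply Summable.of_abs
  have hs : Summable (fun t : ℕ => C * M.γ ^ t) :=
    Summable.mul_left C (summable_geometric_of_lt_one (γ_nonneg M) M.γ_lt_one)
  refine Summable.of_nonneg_of_le (fun t => abs_nonneg _) (fun t => ?_) hs
  rw [abs_mul, abs_pow, abs_of_nonneg (γ_nonneg M), mul_comm]
  exact mul_le_mul_of_nonneg_right (h t) (pow_nonneg (γ_nonneg M) t)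

/-- Summability with linearly growing bound. -/
lemma summable_geom_lin (M : MDP S A) {g : ℕ → ℝ} {C : ℝ} (h : ∀ t, |g t| ≤ t * C) :
    Summable (fun t => M.γ ^ t * g t) := by
  apply Summable.of_abs
  have hpm := summable_pow_mul_geometric_of_norm_lt_one (R := ℝ) (r := M.γ) 1
    (by rw [Real.norm_eq_abs, abs_of_nonneg (γ_nonneg M)]; exact M.γ_lt_one)
  have hs : Summable (fun t : ℕ => C * ((t:ℝ) * M.γ ^ t)) := by
    apply Summable.mul_left
    simpa using hpm
  refine Summable.of_nonneg_of_le (fun t => abs_nonneg _) (fun t => ?_) hs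
  rw [abs_mul, abs_pow, abs_of_nonneg (γ_nonneg M)]
  calc M.γ ^ t * |g t| ≤ M.γ ^ t * (t * C) :=
        mul_le_mul_of_nonneg_left (h t) (pow_nonneg (γ_nonneg M) t)
    _ = C * ((t:ℝ) * M.γ ^ t) := by ring

/-- The per-step expected reward. -/
noncomputable def Frew (M : MDP S A) (π : S → A → ℝ) (s : S) : ℝ := ∑ a, π s a * M.r s a

lemma inner_rew (M : MDP S A) (π : S → A → ℝ) (ρ : S → ℝ) :
    ∑ s, ∑ a, ρ s * π s a * M.r s a = ∑ s, ρ s * Frew M π s := by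
  unfold Frew
  congr 1; funext s
  rw [Finset.mul_sum]
  congr 1; funext a
  ring

lemma Jfrom_eq (M : MDP S A) (π : S → A → ℝ) (μ : S → ℝ) :
    Jfrom M π μ = ∑' t, M.γ ^ t * ∑ s, stateDistFrom M π μ t s * Frew M π s := by
  unfold Jfrom
  congr 1; funext t
  rw [inner_rew]

/-- Crude uniform bound on expected one-step rewards. -/
lemma exp_rew_bound (M : MDP S A) {π : S → A → ℝ} {ρ : S → ℝ}
    (hπ : IsPolicy π) (hρ : IsProb ρ) :
    |∑ s, ρ s * Frew M π s| ≤ ∑ s, ∑ a, |M.r s a| := by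
  calc |∑ s, ρ s * Frew M π s| ≤ ∑ s, |ρ s * Frew M π s| := Finset.abs_sum_le_sum_abs _ _
    _ ≤ ∑ s, ∑ a, |M.r s a| := by
        apply Finset.sum_le_sum
        intro s _
        rw [abs_mul, abs_of_nonneg (hρ.1 s)]
        calc ρ s * |Frew M π s| ≤ 1 * |Frew M π s| :=
              mul_le_mul_of_nonneg_right (hρ.le_one s) (abs_nonneg _)
          _ = |Frew M π s| := one_mul _
          _ ≤ ∑ a, |π s a * M.r s a| := Finset.abs_sum_le_sum_abs _ _
          _ ≤ ∑ a, |M.r s a| := by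
              apply Finset.sum_le_sum
              intro a _
              rw [abs_mul, abs_of_nonneg (hπ.1 s a)]
              calc π s a * |M.r s a| ≤ 1 * |M.r s a| := by
                    apply mul_le_mul_of_nonneg_right _ (abs_nonneg _)
                    calc π s a ≤ ∑ a', π s a' :=
                          Finset.single_le_sum (fun i _ => hπ.1 s i) (Finset.mem_univ a)
                      _ = 1 := hπ.2 s
                _ = |M.r s a| := one_mul _

lemma summable_Jfrom (M : MDP S A) {π : S → A → ℝ} {μ : S → ℝ}
    (hπ : IsPolicy π) (hμ : IsProb μ) :
    Summable (fun t => M.γ ^ t * ∑ s, stateDistFrom M π μ t s * Frew M π s) :=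
  summable_geom_bdd M (fun t => exp_rew_bound M hπ (isProb_stateDistFrom M hπ hμ t))

lemma stateDistFrom_shift (M : MDP S A) (π : S → A → ℝ) (μ : S → ℝ) (t : ℕ) :
    stateDistFrom M π μ (t + 1) = stateDistFrom M π (push M π μ) t := by
  induction t with
  | zero => rfl
  | succ t ih => rw [stateDistFrom_succ, ih, stateDistFrom_succ]

lemma Jfrom_step (M : MDP S A) {π : S → A → ℝ} {μ : S → ℝ}
    (hπ : IsPolicy π) (hμ : IsProb μ) :
    Jfrom M π μ = (∑ s, μ s * Frew M π s) + M.γ * Jfrom M π (push M π μ) := by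
  rw [Jfrom_eq, Summable.tsum_eq_zero_add (summable_Jfrom M hπ hμ)]
  simp only [pow_zero, one_mul]
  congr 1
  rw [Jfrom_eq, ← tsum_mul_left]
  congr 1; funext t
  rw [stateDistFrom_shift]
  ring

lemma stateDistFrom_linear [DecidableEq S] (M : MDP S A) (π : S → A → ℝ) (μ : S → ℝ)
    (t : ℕ) (s : S) :
    stateDistFrom M π μ t s
      = ∑ s0, μ s0 * stateDistFrom M π (fun s' => if s' = s0 then 1 else 0) t s := by
  induction t generalizing s with
  | zero =>
      simp only [stateDistFrom]
      rw [Finset.sum_congr rfl (fun s0 _ => by rw [mul_ite, mul_one, mul_zero])]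
      simp
  | succ t ih =>
      show ∑ s', ∑ a, stateDistFrom M π μ t s' * π s' a * M.p s' a s = _
      have : ∀ s' ∈ Finset.univ (α := S), ∑ a, stateDistFrom M π μ t s' * π s' a * M.p s' a s
          = ∑ s0, μ s0 * ∑ a, stateDistFrom M π (fun x => if x = s0 then 1 else 0) t s' * π s' a * M.p s' a s := by
        intro s' _
        rw [ih]
        rw [Finset.sum_congr rfl (fun a _ => by rw [Finset.sum_mul, Finset.sum_mul])]
        rw [Finset.sum_comm]
        apply Finset.sum_congr rfl
        intro s0 _
        rw [Finset.mul_sum]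
        apply Finset.sum_congr rfl
        intro a _
        ring
      rw [Finset.sum_congr rfl this, Finset.sum_comm]
      apply Finset.sum_congr rfl
      intro s0 _
      show _ = μ s0 * ∑ s', ∑ a, _
      rw [Finset.mul_sum]

lemma Jfrom_linear [DecidableEq S] (M : MDP S A) {π : S → A → ℝ} {μ : S → ℝ}
    (hπ : IsPolicy π) (hμ : IsProb μ) :
    Jfrom M π μ = ∑ s0, μ s0 * Vval M π s0 := by
  rw [Jfrom_eq]
  have key : ∀ t, M.γ ^ t * ∑ s, stateDistFrom M π μ t s * Frew M π s
      = ∑ s0, μ s0 * (M.γ ^ t * ∑ s, stateDistFrom M π (fun s' => if s' = s0 then 1 else 0) t s * Frew M π s) := by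
    intro t
    rw [Finset.sum_congr rfl (fun s _ => by
      rw [stateDistFrom_linear M π μ t s, Finset.sum_mul])]
    rw [Finset.sum_comm, Finset.mul_sum]
    apply Finset.sum_congr rfl
    intro s0 _
    rw [Finset.mul_sum, Finset.mul_sum, Finset.mul_sum]
    apply Finset.sum_congr rfl
    intro s _
    ring
  rw [tsum_congr key, Summable.tsum_finsetSum (fun s0 _ => ?_)]
  · apply Finset.sum_congr rfl
    intro s0 _
    rw [tsum_mul_left, Vval, Jfrom_eq]
  · exact (summable_Jfrom M hπ (isProb_dirac s0)).mul_left (μ s0)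

lemma push_dirac [DecidableEq S] (M : MDP S A) (π : S → A → ℝ) (s : S) (s' : S) :
    push M π (fun x => if x = s then 1 else 0) s' = ∑ a, π s a * M.p s a s' := by
  unfold push
  rw [Finset.sum_eq_single s]
  · apply Finset.sum_congr rfl; intro a _; simp
  · intro x _ hx; apply Finset.sum_eq_zero; intro a _; simp [hx]
  · intro h; exact absurd (Finset.mem_univ s) h

/-- Bellman equation for `Vval`. -/
lemma Vval_bellman [DecidableEq S] (M : MDP S A) {π : S → A → ℝ} (hπ : IsPolicy π) (s : S) :
    Vval M π s = ∑ a, π s a * Qval M π s a := by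
  have h1 : Vval M π s = Frew M π s + M.γ * ∑ s', (∑ a, π s a * M.p s a s') * Vval M π s' := by
    rw [Vval, Jfrom_step M hπ (isProb_dirac s)]
    congr 1
    · rw [Finset.sum_congr rfl (fun x _ => by rw [ite_mul, one_mul, zero_mul]), Finset.sum_ite_eq']
      simp
    · rw [Jfrom_linear M hπ (isProb_push M hπ (isProb_dirac s))]
      congr 1
      apply Finset.sum_congr rfl
      intro s' _
      rw [push_dirac]
  rw [h1]
  unfold Qval Frew
  simp only [mul_add, Finset.mul_sum, Finset.sum_add_distrib, Finset.sum_mul]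
  congr 1
  rw [Finset.sum_comm]
  apply Finset.sum_congr rfl; intro s' _
  apply Finset.sum_congr rfl; intro a _
  ring
lemma abs_exp_le {ρ : S → ℝ} (hρ : IsProb ρ) (f : S → ℝ) :
    |∑ s, ρ s * f s| ≤ ∑ s, |f s| := by
  calc |∑ s, ρ s * f s| ≤ ∑ s, |ρ s * f s| := Finset.abs_sum_le_sum_abs _ _
    _ ≤ ∑ s, |f s| := by
        apply Finset.sum_le_sum
        intro s _
        rw [abs_mul, abs_of_nonneg (hρ.1 s)]
        calc ρ s * |f s| ≤ 1 * |f s| := mul_le_mul_of_nonneg_right (hρ.le_one s) (abs_nonneg _)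
          _ = |f s| := one_mul _

lemma g_eq [DecidableEq S] (M : MDP S A) {π πk : S → A → ℝ} (hπ : IsPolicy π) (s : S) :
    ∑ a, π s a * Adv M πk s a
      = Frew M π s + M.γ * ∑ s', (∑ a, π s a * M.p s a s') * Vval M πk s' - Vval M πk s := by
  have h2 : ∑ a, π s a * Vval M πk s = Vval M πk s := by
    rw [← Finset.sum_mul, hπ.2, one_mul]
  unfold Adv Qval Frew
  simp only [mul_sub, mul_add, Finset.sum_sub_distrib, Finset.sum_add_distrib]
  rw [h2]
  congr 1
  congr 1
  simp only [Finset.mul_sum, Finset.sum_mul]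
  rw [Finset.sum_comm]
  apply Finset.sum_congr rfl; intro s' _
  apply Finset.sum_congr rfl; intro a _
  ring

lemma push_pair (M : MDP S A) (π : S → A → ℝ) (ρ V : S → ℝ) :
    ∑ s, ρ s * ∑ s', (∑ a, π s a * M.p s a s') * V s'
      = ∑ s', push M π ρ s' * V s' := by
  have key : ∀ s' ∈ Finset.univ (α := S), push M π ρ s' * V s'
      = ∑ s, ρ s * ((∑ a, π s a * M.p s a s') * V s') := by
    intro s' _
    unfold push
    simp only [Finset.sum_mul, Finset.mul_sum]
    apply Finset.sum_congr rfl; intro s _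
    apply Finset.sum_congr rfl; intro a _
    ring
  rw [Finset.sum_congr rfl key, Finset.sum_comm]
  apply Finset.sum_congr rfl; intro s _
  rw [Finset.mul_sum]

/-- Expected advantage of π under πk at state s. -/
noncomputable def Gadv [DecidableEq S] (M : MDP S A) (π πk : S → A → ℝ) (s : S) : ℝ :=
  ∑ a, π s a * Adv M πk s a

lemma pdl_step [DecidableEq S] (M : MDP S A) {π πk : S → A → ℝ}
    (hπ : IsPolicy π) (hπk : IsPolicy πk) (ρ : S → ℝ) :
    ∑ s, ρ s * Frew M π s
      = ∑ s, ρ s * Gadv M π πk s + ∑ s, ρ s * Vval M πk s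
        - M.γ * ∑ s', push M π ρ s' * Vval M πk s' := by
  have e1 : ∑ s, ρ s * Gadv M π πk s
      = ∑ s, ρ s * Frew M π s
        + M.γ * (∑ s, ρ s * ∑ s', (∑ a, π s a * M.p s a s') * Vval M πk s')
        - ∑ s, ρ s * Vval M πk s := by
    calc ∑ s, ρ s * Gadv M π πk s
        = ∑ s, (ρ s * Frew M π s
            + M.γ * (ρ s * ∑ s', (∑ a, π s a * M.p s a s') * Vval M πk s')
            - ρ s * Vval M πk s) := by
          apply Finset.sum_congr rfl; intro s _
          rw [Gadv, g_eq M hπ s]; ring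
      _ = _ := by
          rw [Finset.sum_sub_distrib, Finset.sum_add_distrib, ← Finset.mul_sum]
  rw [← push_pair M π ρ (Vval M πk)]
  linarith [e1]

lemma tsum_telescope {a : ℕ → ℝ} (h : Summable (fun t => a t - a (t+1)))
    (h0 : Filter.Tendsto a Filter.atTop (nhds 0)) :
    ∑' t, (a t - a (t+1)) = a 0 := by
  refine tendsto_nhds_unique h.hasSum.tendsto_sum_nat ?_
  have he : ∀ N, ∑ i ∈ Finset.range N, (a i - a (i+1)) = a 0 - a N := by
    intro N; exact Finset.sum_range_sub' a N
  rw [funext he]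
  simpa using Filter.Tendsto.const_sub (a 0) h0

lemma tsum_exp_eq (M : MDP S A) {π : S → A → ℝ} {μ : S → ℝ}
    (hπ : IsPolicy π) (hμ : IsProb μ) (f : S → ℝ) :
    (1 - M.γ) * ∑' t, M.γ ^ t * ∑ s, stateDistFrom M π μ t s * f s
      = ∑ s, visitFrom M π μ s * f s := by
  have hslice : ∀ s, Summable (fun t => M.γ ^ t * (stateDistFrom M π μ t s * f s)) := by
    intro s
    apply summable_geom_bdd M (C := |f s|)
    intro t
    rw [abs_mul, abs_of_nonneg ((isProb_stateDistFrom M hπ hμ t).1 s)]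
    calc stateDistFrom M π μ t s * |f s| ≤ 1 * |f s| :=
          mul_le_mul_of_nonneg_right ((isProb_stateDistFrom M hπ hμ t).le_one s) (abs_nonneg _)
      _ = |f s| := one_mul _
  rw [tsum_congr (fun t => Finset.mul_sum Finset.univ _ _),
    Summable.tsum_finsetSum (fun s _ => hslice s), Finset.mul_sum]
  apply Finset.sum_congr rfl; intro s _
  rw [tsum_congr (fun t => (mul_assoc (M.γ ^ t) _ _).symm), tsum_mul_right, visitFrom]
  ring

lemma summable_exp (M : MDP S A) {π : S → A → ℝ} {μ : S → ℝ}
    (hπ : IsPolicy π) (hμ : IsProb μ) (f : S → ℝ) :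
    Summable (fun t => M.γ ^ t * ∑ s, stateDistFrom M π μ t s * f s) :=
  summable_geom_bdd M (fun t => abs_exp_le (isProb_stateDistFrom M hπ hμ t) f)

/-- Performance difference lemma. -/
lemma perf_diff [DecidableEq S] (M : MDP S A) {π πk : S → A → ℝ}
    (hπ : IsPolicy π) (hπk : IsPolicy πk) :
    Jval M π - Jval M πk = (1 / (1 - M.γ)) * ∑ s, visit M π s * Gadv M π πk s := by
  have hρ0 : IsProb M.ρ0 := ⟨M.ρ0_nonneg, M.ρ0_sum⟩
  set ρ : ℕ → S → ℝ := stateDistFrom M π M.ρ0 with hρdef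
  have hprob : ∀ t, IsProb (ρ t) := isProb_stateDistFrom M hπ hρ0
  set V : S → ℝ := Vval M πk with hV
  set a : ℕ → ℝ := fun t => M.γ ^ t * ∑ s, ρ t s * V s with ha
  have hstep : ∀ t, M.γ ^ t * ∑ s, ρ t s * Frew M π s
      = M.γ ^ t * ∑ s, ρ t s * Gadv M π πk s + (a t - a (t+1)) := by
    intro t
    have h1 := pdl_step M hπ hπk (ρ t)
    have hps : push M π (ρ t) = ρ (t+1) := (stateDistFrom_succ M π M.ρ0 t).symm
    rw [hps, ← hV] at h1
    rw [h1, ha]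
    dsimp only
    rw [pow_succ]
    ring
  have hsumG : Summable (fun t => M.γ ^ t * ∑ s, ρ t s * Gadv M π πk s) :=
    summable_geom_bdd M (fun t => abs_exp_le (hprob t) _)
  have hsumV : Summable a :=
    summable_geom_bdd M (fun t => abs_exp_le (hprob t) V)
  have hsuma : Summable (fun t => a t - a (t+1)) :=
    hsumV.sub ((summable_nat_add_iff 1).mpr hsumV)
  have htend : Filter.Tendsto a Filter.atTop (nhds 0) := by
    have hb : ∀ t, ‖a t‖ ≤ (∑ s, |V s|) * M.γ ^ t := by
      intro t
      rw [Real.norm_eq_abs, ha]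
      dsimp only
      rw [abs_mul, abs_pow, abs_of_nonneg (γ_nonneg M), mul_comm]
      exact mul_le_mul_of_nonneg_right (abs_exp_le (hprob t) V) (pow_nonneg (γ_nonneg M) t)
    refine squeeze_zero_norm hb ?_
    simpa using (tendsto_pow_atTop_nhds_zero_of_lt_one (γ_nonneg M) M.γ_lt_one).const_mul
      (∑ s, |V s|)
  have hJπ : Jval M π = (∑' t, M.γ ^ t * ∑ s, ρ t s * Gadv M π πk s) + a 0 := by
    rw [Jval, Jfrom_eq, tsum_congr hstep, Summable.tsum_add hsumG hsuma, tsum_telescope hsuma htend]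
  have hJπk : Jval M πk = a 0 := by
    rw [Jval, Jfrom_linear M hπk hρ0, ha]
    dsimp only
    rw [pow_zero, one_mul]
    rfl
  rw [hJπ, hJπk, add_sub_cancel_right]
  have hkey := tsum_exp_eq M hπ hρ0 (Gadv M π πk)
  have h1γ := one_sub_γ_pos M
  rw [show (∑ s, visit M π s * Gadv M π πk s) = ∑ s, visitFrom M π M.ρ0 s * Gadv M π πk s from rfl]
  rw [← hkey]
  field_simp
  rfl
lemma abs_sub'' (a b : ℝ) : |a - b| ≤ |a| + |b| := by
  calc |a - b| = |a + (-b)| := by rw [sub_eq_add_neg]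
    _ ≤ |a| + |-b| := abs_add_le _ _
    _ = |a| + |b| := by rw [abs_neg]

lemma tvPol_nonneg (π πref : S → A → ℝ) (s : S) : 0 ≤ tvPol π πref s := by
  unfold tvPol
  have : 0 ≤ ∑ a, |π s a - πref s a| := Finset.sum_nonneg (fun a _ => abs_nonneg _)
  linarith

lemma l1_step (M : MDP S A) {π πref : S → A → ℝ} (hπ : IsPolicy π) (hπref : IsPolicy πref)
    {σ : S → ℝ} (hσ : ∀ s, 0 ≤ σ s) (ρ : S → ℝ) :
    ∑ s', |push M π ρ s' - push M πref σ s'|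
      ≤ ∑ s, |ρ s - σ s| + 2 * ∑ s, σ s * tvPol π πref s := by
  have h1 : ∀ s', |push M π ρ s' - push M πref σ s'|
      ≤ ∑ s, ∑ a, |ρ s * π s a - σ s * πref s a| * M.p s a s' := by
    intro s'
    unfold push
    rw [← Finset.sum_sub_distrib]
    refine (Finset.abs_sum_le_sum_abs _ _).trans ?_
    apply Finset.sum_le_sum; intro s _
    rw [← Finset.sum_sub_distrib]
    refine (Finset.abs_sum_le_sum_abs _ _).trans ?_
    apply Finset.sum_le_sum; intro a _
    rw [← sub_mul, abs_mul, abs_of_nonneg (M.p_nonneg s a s')]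
  calc ∑ s', |push M π ρ s' - push M πref σ s'|
      ≤ ∑ s', ∑ s, ∑ a, |ρ s * π s a - σ s * πref s a| * M.p s a s' :=
        Finset.sum_le_sum (fun s' _ => h1 s')
    _ = ∑ s, ∑ a, |ρ s * π s a - σ s * πref s a| := by
        rw [Finset.sum_comm]
        apply Finset.sum_congr rfl; intro s _
        rw [Finset.sum_comm]
        apply Finset.sum_congr rfl; intro a _
        rw [← Finset.mul_sum, M.p_sum, mul_one]
    _ ≤ ∑ s, (|ρ s - σ s| + 2 * (σ s * tvPol π πref s)) := by
        apply Finset.sum_le_sum; intro s _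
        calc ∑ a, |ρ s * π s a - σ s * πref s a|
            ≤ ∑ a, (|ρ s - σ s| * π s a + σ s * |π s a - πref s a|) := by
              apply Finset.sum_le_sum; intro a _
              have he : ρ s * π s a - σ s * πref s a
                  = (ρ s - σ s) * π s a + σ s * (π s a - πref s a) := by ring
              rw [he]
              refine (abs_add_le _ _).trans ?_
              rw [abs_mul, abs_mul, abs_of_nonneg (hπ.1 s a), abs_of_nonneg (hσ s)]
          _ = |ρ s - σ s| + 2 * (σ s * tvPol π πref s) := by
              rw [Finset.sum_add_distrib, ← Finset.mul_sum, ← Finset.mul_sum, hπ.2, mul_one,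
                tvPol]
              ring
    _ = _ := by rw [Finset.sum_add_distrib, ← Finset.mul_sum, Finset.mul_sum]

lemma tsum_range_geom (M : MDP S A) {c : ℕ → ℝ} {B : ℝ} (hc0 : ∀ u, 0 ≤ c u)
    (hcB : ∀ u, c u ≤ B) :
    ∑' t, M.γ ^ t * ∑ u ∈ Finset.range t, c u
      = (M.γ / (1 - M.γ)) * ∑' u, M.γ ^ u * c u := by
  have hSb : ∀ t : ℕ, |∑ u ∈ Finset.range t, c u| ≤ t * B := by
    intro t
    rw [abs_of_nonneg (Finset.sum_nonneg fun u _ => hc0 u)]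
    calc ∑ u ∈ Finset.range t, c u ≤ ∑ _u ∈ Finset.range t, B :=
          Finset.sum_le_sum (fun u _ => hcB u)
      _ = t * B := by rw [Finset.sum_const, Finset.card_range, nsmul_eq_mul]
  have hF : Summable (fun t => M.γ ^ t * ∑ u ∈ Finset.range t, c u) := summable_geom_lin M hSb
  have hG : Summable (fun t => M.γ ^ t * c t) :=
    summable_geom_bdd M (fun t => by rw [abs_of_nonneg (hc0 t)]; exact hcB t)
  have key : ∑' t, M.γ ^ t * ∑ u ∈ Finset.range t, c u
      = M.γ * (∑' t, M.γ ^ t * ∑ u ∈ Finset.range t, c u) + M.γ * ∑' t, M.γ ^ t * c t := by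
    conv_lhs => rw [Summable.tsum_eq_zero_add hF]
    have he : ∀ t : ℕ, M.γ ^ (t+1) * ∑ u ∈ Finset.range (t+1), c u
        = M.γ * (M.γ ^ t * ∑ u ∈ Finset.range t, c u) + M.γ * (M.γ ^ t * c t) := by
      intro t
      rw [Finset.sum_range_succ, pow_succ]
      ring
    rw [tsum_congr he, Summable.tsum_add (hF.mul_left M.γ) (hG.mul_left M.γ), tsum_mul_left, tsum_mul_left]
    simp
  have h1γ := one_sub_γ_pos M
  have h1γ' : (1 : ℝ) - M.γ ≠ 0 := ne_of_gt h1γ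
  field_simp
  linarith [key]

/-- ℓ¹ bound between visitation distributions in terms of expected TV distance. -/
lemma visit_l1 (M : MDP S A) {π πref : S → A → ℝ} (hπ : IsPolicy π) (hπref : IsPolicy πref) :
    (1 - M.γ) * ∑ s, |visit M π s - visit M πref s|
      ≤ 2 * M.γ * ∑ s, visit M πref s * tvPol π πref s := by
  have hρ0 : IsProb M.ρ0 := ⟨M.ρ0_nonneg, M.ρ0_sum⟩
  have hρp : ∀ t, IsProb (stateDistFrom M π M.ρ0 t) := isProb_stateDistFrom M hπ hρ0
  have hσp : ∀ t, IsProb (stateDistFrom M πref M.ρ0 t) := isProb_stateDistFrom M hπref hρ0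
  have h1γ := one_sub_γ_pos M
  set B : ℝ := ∑ s, tvPol π πref s with hB
  have hc0 : ∀ u : ℕ, 0 ≤ ∑ s, stateDistFrom M πref M.ρ0 u s * tvPol π πref s :=
    fun u => Finset.sum_nonneg (fun s _ => mul_nonneg ((hσp u).1 s) (tvPol_nonneg π πref s))
  have hcB : ∀ u : ℕ, ∑ s, stateDistFrom M πref M.ρ0 u s * tvPol π πref s ≤ B := by
    intro u
    apply Finset.sum_le_sum; intro s _
    calc stateDistFrom M πref M.ρ0 u s * tvPol π πref s ≤ 1 * tvPol π πref s :=
          mul_le_mul_of_nonneg_right ((hσp u).le_one s) (tvPol_nonneg π πref s)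
      _ = tvPol π πref s := one_mul _
  -- summability of basic sequences
  have hsum1 : ∀ s, Summable (fun t => M.γ ^ t * stateDistFrom M π M.ρ0 t s) := fun s =>
    summable_geom_bdd M (C := 1) (fun t => by
      rw [abs_of_nonneg ((hρp t).1 s)]; exact (hρp t).le_one s)
  have hsum2 : ∀ s, Summable (fun t => M.γ ^ t * stateDistFrom M πref M.ρ0 t s) := fun s =>
    summable_geom_bdd M (C := 1) (fun t => by
      rw [abs_of_nonneg ((hσp t).1 s)]; exact (hσp t).le_one s)
  have habs : ∀ s, Summable (fun t =>
      M.γ ^ t * |stateDistFrom M π M.ρ0 t s - stateDistFrom M πref M.ρ0 t s|) := fun s =>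
    summable_geom_bdd M (C := 2) (fun t => by
      rw [abs_abs]
      calc |stateDistFrom M π M.ρ0 t s - stateDistFrom M πref M.ρ0 t s|
          ≤ |stateDistFrom M π M.ρ0 t s| + |stateDistFrom M πref M.ρ0 t s| := abs_sub'' _ _
        _ ≤ 2 := by
            rw [abs_of_nonneg ((hρp t).1 s), abs_of_nonneg ((hσp t).1 s)]
            linarith [(hρp t).le_one s, (hσp t).le_one s])
  -- pointwise bound on the visitation difference
  have hd : ∀ s, |visit M π s - visit M πref s|
      ≤ (1 - M.γ) * ∑' t, M.γ ^ t *
          |stateDistFrom M π M.ρ0 t s - stateDistFrom M πref M.ρ0 t s| := by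
    intro s
    unfold visit visitFrom
    rw [← mul_sub, abs_mul, abs_of_nonneg (le_of_lt h1γ)]
    apply mul_le_mul_of_nonneg_left _ (le_of_lt h1γ)
    rw [← Summable.tsum_sub (hsum1 s) (hsum2 s)]
    have he : ∀ t : ℕ, |M.γ ^ t * stateDistFrom M π M.ρ0 t s
        - M.γ ^ t * stateDistFrom M πref M.ρ0 t s|
        = M.γ ^ t * |stateDistFrom M π M.ρ0 t s - stateDistFrom M πref M.ρ0 t s| := by
      intro t
      rw [← mul_sub, abs_mul, abs_pow, abs_of_nonneg (γ_nonneg M)]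
    have hs2 : Summable (fun t => |M.γ ^ t * stateDistFrom M π M.ρ0 t s
        - M.γ ^ t * stateDistFrom M πref M.ρ0 t s|) :=
      (summable_congr (fun t => he t)).mpr (habs s)
    have h3 := norm_tsum_le_tsum_norm (f := fun t => M.γ ^ t * stateDistFrom M π M.ρ0 t s
      - M.γ ^ t * stateDistFrom M πref M.ρ0 t s) (by simpa [Real.norm_eq_abs] using hs2)
    calc |∑' t, (M.γ ^ t * stateDistFrom M π M.ρ0 t s
        - M.γ ^ t * stateDistFrom M πref M.ρ0 t s)|
        ≤ ∑' t, |M.γ ^ t * stateDistFrom M π M.ρ0 t s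
            - M.γ ^ t * stateDistFrom M πref M.ρ0 t s| := by
          simpa [Real.norm_eq_abs] using h3
      _ = _ := tsum_congr he
  -- sum the pointwise bound over states and swap sums
  have hL : ∑ s, |visit M π s - visit M πref s|
      ≤ (1 - M.γ) * ∑' t, M.γ ^ t *
          ∑ s, |stateDistFrom M π M.ρ0 t s - stateDistFrom M πref M.ρ0 t s| := by
    calc ∑ s, |visit M π s - visit M πref s|
        ≤ ∑ s, (1 - M.γ) * ∑' t, M.γ ^ t *
            |stateDistFrom M π M.ρ0 t s - stateDistFrom M πref M.ρ0 t s| :=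
          Finset.sum_le_sum (fun s _ => hd s)
      _ = (1 - M.γ) * ∑ s, ∑' t, M.γ ^ t *
            |stateDistFrom M π M.ρ0 t s - stateDistFrom M πref M.ρ0 t s| := by
          rw [Finset.mul_sum]
      _ = _ := by
          congr 1
          rw [← Summable.tsum_finsetSum (fun s _ => habs s)]
          apply tsum_congr; intro t
          rw [Finset.mul_sum]
  -- the per-time ℓ¹ recursion bound
  have hδ : ∀ t : ℕ, ∑ s, |stateDistFrom M π M.ρ0 t s - stateDistFrom M πref M.ρ0 t s|
      ≤ 2 * ∑ u ∈ Finset.range t, ∑ s, stateDistFrom M πref M.ρ0 u s * tvPol π πref s := by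
    intro t
    induction t with
    | zero => simp [stateDistFrom]
    | succ t ih =>
      rw [Finset.sum_range_succ, mul_add]
      have hstep := l1_step M hπ hπref (fun s => (hσp t).1 s) (stateDistFrom M π M.ρ0 t)
      calc ∑ s, |stateDistFrom M π M.ρ0 (t+1) s - stateDistFrom M πref M.ρ0 (t+1) s|
          = ∑ s', |push M π (stateDistFrom M π M.ρ0 t) s'
              - push M πref (stateDistFrom M πref M.ρ0 t) s'| := rfl
        _ ≤ ∑ s, |stateDistFrom M π M.ρ0 t s - stateDistFrom M πref M.ρ0 t s|
            + 2 * ∑ s, stateDistFrom M πref M.ρ0 t s * tvPol π πref s := hstep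
        _ ≤ _ := by linarith [ih]
  -- summability of both sides of the time-summed inequality
  have hLHSsum : Summable (fun t => M.γ ^ t *
      ∑ s, |stateDistFrom M π M.ρ0 t s - stateDistFrom M πref M.ρ0 t s|) := by
    apply summable_geom_bdd M (C := 2 * (Fintype.card S : ℝ))
    intro t
    rw [abs_of_nonneg (Finset.sum_nonneg fun s _ => abs_nonneg _)]
    calc ∑ s, |stateDistFrom M π M.ρ0 t s - stateDistFrom M πref M.ρ0 t s|
        ≤ ∑ _s : S, (2:ℝ) := by
          apply Finset.sum_le_sum; intro s _
          calc |stateDistFrom M π M.ρ0 t s - stateDistFrom M πref M.ρ0 t s|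
              ≤ |stateDistFrom M π M.ρ0 t s| + |stateDistFrom M πref M.ρ0 t s| := abs_sub'' _ _
            _ ≤ 2 := by
                rw [abs_of_nonneg ((hρp t).1 s), abs_of_nonneg ((hσp t).1 s)]
                linarith [(hρp t).le_one s, (hσp t).le_one s]
      _ = 2 * (Fintype.card S : ℝ) := by
          rw [Finset.sum_const, Finset.card_univ, nsmul_eq_mul]
          ring
  have hRHSsum : Summable (fun t => M.γ ^ t *
      (2 * ∑ u ∈ Finset.range t, ∑ s, stateDistFrom M πref M.ρ0 u s * tvPol π πref s)) := by
    apply summable_geom_lin M (C := 2 * B)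
    intro t
    have hS0 : 0 ≤ ∑ u ∈ Finset.range t, ∑ s, stateDistFrom M πref M.ρ0 u s * tvPol π πref s :=
      Finset.sum_nonneg (fun u _ => hc0 u)
    rw [abs_of_nonneg (by linarith)]
    have hSB : ∑ u ∈ Finset.range t, ∑ s, stateDistFrom M πref M.ρ0 u s * tvPol π πref s
        ≤ ∑ _u ∈ Finset.range t, B := Finset.sum_le_sum (fun u _ => hcB u)
    rw [Finset.sum_const, Finset.card_range, nsmul_eq_mul] at hSB
    calc 2 * ∑ u ∈ Finset.range t, ∑ s, stateDistFrom M πref M.ρ0 u s * tvPol π πref s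
        ≤ 2 * ((t:ℝ) * B) := by linarith
      _ = (t:ℝ) * (2*B) := by ring
  have h2 : ∑' t, M.γ ^ t * ∑ s, |stateDistFrom M π M.ρ0 t s - stateDistFrom M πref M.ρ0 t s|
      ≤ ∑' t, M.γ ^ t *
          (2 * ∑ u ∈ Finset.range t, ∑ s, stateDistFrom M πref M.ρ0 u s * tvPol π πref s) :=
    Summable.tsum_le_tsum (fun t => mul_le_mul_of_nonneg_left (hδ t) (pow_nonneg (γ_nonneg M) t))
      hLHSsum hRHSsum
  have h3 : ∑' t, M.γ ^ t *
      (2 * ∑ u ∈ Finset.range t, ∑ s, stateDistFrom M πref M.ρ0 u s * tvPol π πref s)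
      = (2 * M.γ / (1 - M.γ)) *
          ∑' u, M.γ ^ u * ∑ s, stateDistFrom M πref M.ρ0 u s * tvPol π πref s := by
    have he2 : ∀ t : ℕ, M.γ ^ t *
        (2 * ∑ u ∈ Finset.range t, ∑ s, stateDistFrom M πref M.ρ0 u s * tvPol π πref s)
        = 2 * (M.γ ^ t * ∑ u ∈ Finset.range t, ∑ s, stateDistFrom M πref M.ρ0 u s * tvPol π πref s) :=
      fun t => by ring
    rw [tsum_congr he2, tsum_mul_left, tsum_range_geom M hc0 hcB]
    ring
  have h4 := tsum_exp_eq M hπref hρ0 (tvPol π πref)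
  calc (1 - M.γ) * ∑ s, |visit M π s - visit M πref s|
      ≤ (1 - M.γ) * ((1 - M.γ) * ∑' t, M.γ ^ t *
          ∑ s, |stateDistFrom M π M.ρ0 t s - stateDistFrom M πref M.ρ0 t s|) :=
        mul_le_mul_of_nonneg_left hL (le_of_lt h1γ)
    _ ≤ (1 - M.γ) * ((1 - M.γ) * ∑' t, M.γ ^ t *
          (2 * ∑ u ∈ Finset.range t, ∑ s, stateDistFrom M πref M.ρ0 u s * tvPol π πref s)) := by
        apply mul_le_mul_of_nonneg_left _ (le_of_lt h1γ)
        exact mul_le_mul_of_nonneg_left h2 (le_of_lt h1γ)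
    _ = 2 * M.γ * ((1 - M.γ) *
          ∑' u, M.γ ^ u * ∑ s, stateDistFrom M πref M.ρ0 u s * tvPol π πref s) := by
        rw [h3]
        have h1γ' : (1 : ℝ) - M.γ ≠ 0 := ne_of_gt h1γ
        field_simp
    _ = _ := by rw [h4]; rfl
end PILB

open PILB in
/-- Policy improvement lower bound relative to a reference policy:
`J(π) - J(π_k) ≥ (1/(1-γ)) E_{(s,a)∼d^{π_ref}}[(π/π_ref) A^{π_k}]
  - (2γ C^{π,π_k}/(1-γ)^2) E_{s∼d^{π_ref}}[TV(π,π_ref)(s)]`,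
where `C^{π,π_k} = max_s |E_{a∼π(·|s)}[A^{π_k}(s,a)]|`. -/
theorem policy_improvement_lower_bound_ref [DecidableEq S] [Nonempty S]
    (M : MDP S A) (π πk πref : S → A → ℝ)
    (hπ : IsPolicy π) (hπk : IsPolicy πk) (hπref : IsPolicy πref)
    (hsupp : ∀ s a, π s a ≠ 0 → πref s a ≠ 0) :
    Jval M π - Jval M πk
      ≥ (1 / (1 - M.γ)) *
          (∑ s, ∑ a, (visit M πref s * πref s a) * ((π s a / πref s a) * Adv M πk s a))
        - (2 * M.γ * (⨆ s, |∑ a, π s a * Adv M πk s a|) / (1 - M.γ) ^ 2) *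
            ∑ s, visit M πref s * tvPol π πref s := by
  have h1γ := one_sub_γ_pos M
  set C : ℝ := ⨆ s, |∑ a, π s a * Adv M πk s a| with hC
  have hCg : ∀ s, |Gadv M π πk s| ≤ C := fun s =>
    le_ciSup (Set.finite_range (fun s => |∑ a, π s a * Adv M πk s a|)).bddAbove s
  have hC0 : 0 ≤ C := le_trans (abs_nonneg _) (hCg (Classical.arbitrary S))
  -- rewrite the first (importance-sampling) term
  have hterm : ∑ s, ∑ a, (visit M πref s * πref s a) * ((π s a / πref s a) * Adv M πk s a)
      = ∑ s, visit M πref s * Gadv M π πk s := by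
    apply Finset.sum_congr rfl; intro s _
    rw [Gadv, Finset.mul_sum]
    apply Finset.sum_congr rfl; intro a _
    by_cases h : πref s a = 0
    · have hπ0 : π s a = 0 := by
        by_contra hne
        exact hsupp s a hne h
      rw [h, hπ0]
      ring
    · field_simp
  rw [perf_diff M hπ hπk, hterm]
  -- abbreviations
  set X : ℝ := ∑ s, visit M π s * Gadv M π πk s with hX
  set Y : ℝ := ∑ s, visit M πref s * Gadv M π πk s with hY
  set T : ℝ := ∑ s, visit M πref s * tvPol π πref s with hT
  set L : ℝ := ∑ s, |visit M π s - visit M πref s| with hL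
  have hvl1 : (1 - M.γ) * L ≤ 2 * M.γ * T := visit_l1 M hπ hπref
  have hdiff : |X - Y| ≤ C * L := by
    rw [hX, hY, hL, ← Finset.sum_sub_distrib, Finset.mul_sum]
    refine (Finset.abs_sum_le_sum_abs _ _).trans ?_
    apply Finset.sum_le_sum; intro s _
    rw [← sub_mul, abs_mul]
    calc |visit M π s - visit M πref s| * |Gadv M π πk s|
        ≤ |visit M π s - visit M πref s| * C :=
          mul_le_mul_of_nonneg_left (hCg s) (abs_nonneg _)
      _ = C * |visit M π s - visit M πref s| := mul_comm _ _
  have hkey : Y - X ≤ C * L := by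
    calc Y - X ≤ |Y - X| := le_abs_self _
      _ = |X - Y| := abs_sub_comm _ _
      _ ≤ C * L := hdiff
  have hpos : (0:ℝ) < (1 - M.γ) ^ 2 := by positivity
  have expand : (1 / (1 - M.γ)) * X - ((1 / (1 - M.γ)) * Y - (2 * M.γ * C / (1 - M.γ) ^ 2) * T)
      = ((1 - M.γ) * (X - Y) + 2 * M.γ * C * T) / (1 - M.γ) ^ 2 := by
    field_simp
    ring
  rw [ge_iff_le, ← sub_nonneg, expand]
  apply div_nonneg _ (le_of_lt hpos)
  nlinarith [mul_le_mul_of_nonneg_left hvl1 hC0, mul_le_mul_of_nonneg_left hkey (le_of_lt h1γ)]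
end

section
/- Generalized policy improvement lower bound over M prior policies: for prior policies π_{k-i}, i = 0,…,M-1 (with π_{k-0} = π_k being the current policy), any distribution ν over {0,…,M-1}, and any future policy π with supp π(·|s) ⊆ supp π_{k-i}(·|s) for all s, i: J(π) - J(π_k) ≥ (1/(1-γ)) E_{i∼ν} E_{(s,a)∼d^{π_{k-i}}}[(π(a|s)/π_{k-i}(a|s)) A^{π_k}(s,a)] - (2γ C^{π,π_k}/(1-γ)^2) E_{i∼ν} E_{s∼d^{π_{k-i}}}[TV(π, π_{k-i})(s)]. -/
set_option linter.unusedSectionVars false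
set_option linter.unusedVariables false
set_option maxHeartbeats 1000000


open scoped BigOperators

variable {S A : Type*} [Fintype S] [Fintype A]

namespace GPI

lemma pol_le_one {π : S → A → ℝ} (hπ : IsPolicy π) (s : S) (a : A) : π s a ≤ 1 := by
  calc π s a ≤ ∑ a', π s a' :=
        Finset.single_le_sum (fun a' _ => hπ.1 s a') (Finset.mem_univ a)
    _ = 1 := hπ.2 s

lemma γ_nonneg (M : MDP S A) : (0:ℝ) ≤ M.γ := le_of_lt M.γ_pos

lemma one_sub_γ_pos (M : MDP S A) : (0:ℝ) < 1 - M.γ := by linarith [M.γ_lt_one]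

lemma summable_geom_mul (M : MDP S A) {f : ℕ → ℝ} {B : ℝ} (hf : ∀ t, |f t| ≤ B) :
    Summable (fun t => M.γ ^ t * f t) := by
  apply Summable.of_abs
  refine Summable.of_nonneg_of_le (fun t => abs_nonneg _) (fun t => ?_)
    ((summable_geometric_of_lt_one (γ_nonneg M) M.γ_lt_one).mul_right B)
  rw [abs_mul, abs_pow, abs_of_pos M.γ_pos]
  exact mul_le_mul_of_nonneg_left (hf t) (pow_nonneg (γ_nonneg M) t)

structure IsDist (μ : S → ℝ) : Prop where
  nonneg : ∀ s, 0 ≤ μ s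
  sum_one : ∑ s, μ s = 1

lemma dist_le_one {μ : S → ℝ} (hμ : IsDist μ) (s : S) : μ s ≤ 1 := by
  calc μ s ≤ ∑ s', μ s' := Finset.single_le_sum (fun s' _ => hμ.nonneg s') (Finset.mem_univ s)
    _ = 1 := hμ.sum_one

lemma sdf_dist (M : MDP S A) {π : S → A → ℝ} (hπ : IsPolicy π) {μ : S → ℝ} (hμ : IsDist μ) :
    ∀ t, IsDist (stateDistFrom M π μ t) := by
  intro t
  induction t with
  | zero => exact hμ
  | succ t ih =>
    constructor
    · intro s'
      exact Finset.sum_nonneg fun s _ => Finset.sum_nonneg fun a _ =>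
        mul_nonneg (mul_nonneg (ih.nonneg s) (hπ.1 s a)) (M.p_nonneg s a s')
    · show ∑ s', ∑ s, ∑ a, stateDistFrom M π μ t s * π s a * M.p s a s' = 1
      rw [Finset.sum_comm]
      calc ∑ s, ∑ s', ∑ a, stateDistFrom M π μ t s * π s a * M.p s a s'
          = ∑ s, ∑ a, ∑ s', stateDistFrom M π μ t s * π s a * M.p s a s' := by
            exact Finset.sum_congr rfl fun s _ => Finset.sum_comm
        _ = ∑ s, ∑ a, stateDistFrom M π μ t s * π s a := by
            refine Finset.sum_congr rfl fun s _ => Finset.sum_congr rfl fun a _ => ?_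
            rw [← Finset.mul_sum, M.p_sum, mul_one]
        _ = ∑ s, stateDistFrom M π μ t s := by
            refine Finset.sum_congr rfl fun s _ => ?_
            rw [← Finset.mul_sum, hπ.2, mul_one]
        _ = 1 := ih.sum_one

lemma abs_sdf_le_one (M : MDP S A) {π : S → A → ℝ} (hπ : IsPolicy π) {μ : S → ℝ}
    (hμ : IsDist μ) (t : ℕ) (s : S) : |stateDistFrom M π μ t s| ≤ 1 := by
  have h := sdf_dist M hπ hμ t
  rw [abs_of_nonneg (h.nonneg s)]
  exact dist_le_one h s

end GPI

-- appended to part1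
namespace GPI
variable {S A : Type*} [Fintype S] [Fintype A]


lemma sum_comm3 {α β γ : Type*} [Fintype α] [Fintype β] [Fintype γ] (f : α → β → γ → ℝ) :
    ∑ a, ∑ b, ∑ c, f a b c = ∑ c, ∑ a, ∑ b, f a b c := by
  have h : ∀ a : α, ∑ b, ∑ c, f a b c = ∑ c, ∑ b, f a b c := fun a => Finset.sum_comm
  simp_rw [h]
  exact Finset.sum_comm

noncomputable def delta [DecidableEq S] (s0 : S) : S → ℝ := fun s' => if s' = s0 then 1 else 0

lemma delta_dist [DecidableEq S] (s0 : S) : IsDist (delta s0) := by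
  constructor
  · intro s; unfold delta; split <;> norm_num
  · simp [delta]

/-- sdf is linear in μ via deltas -/
lemma sdf_delta [DecidableEq S] (M : MDP S A) (π : S → A → ℝ) (μ : S → ℝ) (t : ℕ) (s : S) :
    stateDistFrom M π μ t s = ∑ s0, μ s0 * stateDistFrom M π (delta s0) t s := by
  induction t generalizing s with
  | zero =>
    show μ s = ∑ s0, μ s0 * delta s0 s
    simp [delta, mul_ite]
  | succ t ih =>
    show ∑ s', ∑ a, stateDistFrom M π μ t s' * π s' a * M.p s' a s
        = ∑ s0, μ s0 * ∑ s', ∑ a, stateDistFrom M π (delta s0) t s' * π s' a * M.p s' a s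
    calc ∑ s', ∑ a, stateDistFrom M π μ t s' * π s' a * M.p s' a s
        = ∑ s', ∑ a, ∑ s0, μ s0 * (stateDistFrom M π (delta s0) t s' * π s' a * M.p s' a s) := by
          refine Finset.sum_congr rfl fun s' _ => Finset.sum_congr rfl fun a _ => ?_
          rw [ih s', Finset.sum_mul, Finset.sum_mul]
          exact Finset.sum_congr rfl fun s0 _ => by ring
      _ = ∑ s0, ∑ s', ∑ a, μ s0 * (stateDistFrom M π (delta s0) t s' * π s' a * M.p s' a s) :=
          sum_comm3 _
      _ = ∑ s0, μ s0 * ∑ s', ∑ a, stateDistFrom M π (delta s0) t s' * π s' a * M.p s' a s := by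
          simp only [Finset.mul_sum]

noncomputable def Vv [DecidableEq S] (M : MDP S A) (π : S → A → ℝ) (s : S) : ℝ :=
  Jfrom M π (delta s)

lemma rbound_aux (M : MDP S A) {π : S → A → ℝ} (hπ : IsPolicy π) {μ : S → ℝ} (hμ : IsDist μ)
    (t : ℕ) : |∑ s, ∑ a, stateDistFrom M π μ t s * π s a * M.r s a| ≤ ∑ s, ∑ a, |M.r s a| := by
  calc |∑ s, ∑ a, stateDistFrom M π μ t s * π s a * M.r s a|
      ≤ ∑ s, |∑ a, stateDistFrom M π μ t s * π s a * M.r s a| :=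
        Finset.abs_sum_le_sum_abs _ _
    _ ≤ ∑ s, ∑ a, |stateDistFrom M π μ t s * π s a * M.r s a| :=
        Finset.sum_le_sum fun s _ => Finset.abs_sum_le_sum_abs _ _
    _ ≤ ∑ s, ∑ a, |M.r s a| := by
        refine Finset.sum_le_sum fun s _ => Finset.sum_le_sum fun a _ => ?_
        rw [abs_mul, abs_mul]
        have h1 : |stateDistFrom M π μ t s| ≤ 1 := abs_sdf_le_one M hπ hμ t s
        have h2 : |π s a| ≤ 1 := by rw [abs_of_nonneg (hπ.1 s a)]; exact pol_le_one hπ s a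
        calc |stateDistFrom M π μ t s| * |π s a| * |M.r s a|
            ≤ 1 * 1 * |M.r s a| := by
              apply mul_le_mul_of_nonneg_right _ (abs_nonneg _)
              exact mul_le_mul h1 h2 (abs_nonneg _) zero_le_one
          _ = |M.r s a| := by ring

lemma Jfrom_summable (M : MDP S A) {π : S → A → ℝ} (hπ : IsPolicy π) {μ : S → ℝ}
    (hμ : IsDist μ) :
    Summable (fun t => M.γ ^ t * ∑ s, ∑ a, stateDistFrom M π μ t s * π s a * M.r s a) :=
  summable_geom_mul M (rbound_aux M hπ hμ)

/-- Jfrom is the μ-average of values. -/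
lemma Jfrom_linear [DecidableEq S] (M : MDP S A) {π : S → A → ℝ} (hπ : IsPolicy π)
    (μ : S → ℝ) : Jfrom M π μ = ∑ s0, μ s0 * Vv M π s0 := by
  unfold Jfrom
  have key : ∀ t, M.γ ^ t * ∑ s, ∑ a, stateDistFrom M π μ t s * π s a * M.r s a
      = ∑ s0, μ s0 * (M.γ ^ t * ∑ s, ∑ a, stateDistFrom M π (delta s0) t s * π s a * M.r s a) := by
    intro t
    calc M.γ ^ t * ∑ s, ∑ a, stateDistFrom M π μ t s * π s a * M.r s a
        = M.γ ^ t * ∑ s, ∑ a, ∑ s0, μ s0 * (stateDistFrom M π (delta s0) t s * π s a * M.r s a) := by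
          congr 1
          refine Finset.sum_congr rfl fun s _ => Finset.sum_congr rfl fun a _ => ?_
          rw [sdf_delta M π μ t s, Finset.sum_mul, Finset.sum_mul]
          exact Finset.sum_congr rfl fun s0 _ => by ring
      _ = M.γ ^ t * ∑ s0, ∑ s, ∑ a, μ s0 * (stateDistFrom M π (delta s0) t s * π s a * M.r s a) := by
          congr 1
          exact sum_comm3 _
      _ = ∑ s0, μ s0 * (M.γ ^ t * ∑ s, ∑ a, stateDistFrom M π (delta s0) t s * π s a * M.r s a) := by
          simp only [Finset.mul_sum]
          exact Finset.sum_congr rfl fun s0 _ => Finset.sum_congr rfl fun s _ =>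
            Finset.sum_congr rfl fun a _ => by ring
  rw [tsum_congr key, Summable.tsum_finsetSum (fun s0 _ => ?_)]
  · exact Finset.sum_congr rfl fun s0 _ => tsum_mul_left
  · exact Summable.mul_left _ (Jfrom_summable M hπ (delta_dist s0))

end GPI

namespace GPI
variable {S A : Type*} [Fintype S] [Fintype A]

lemma ρ0_dist (M : MDP S A) : IsDist M.ρ0 := ⟨M.ρ0_nonneg, M.ρ0_sum⟩

noncomputable def dt (M : MDP S A) (π : S → A → ℝ) (s : S) : ℝ :=
  ∑' t, M.γ ^ t * stateDistFrom M π M.ρ0 t s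

lemma dt_summable (M : MDP S A) {π : S → A → ℝ} (hπ : IsPolicy π) (s : S) :
    Summable (fun t => M.γ ^ t * stateDistFrom M π M.ρ0 t s) :=
  summable_geom_mul M (fun t => abs_sdf_le_one M hπ (ρ0_dist M) t s)

lemma dt_nonneg (M : MDP S A) {π : S → A → ℝ} (hπ : IsPolicy π) (s : S) : 0 ≤ dt M π s :=
  tsum_nonneg fun t => mul_nonneg (pow_nonneg (γ_nonneg M) t)
    ((sdf_dist M hπ (ρ0_dist M) t).nonneg s)

lemma dt_flow (M : MDP S A) {π : S → A → ℝ} (hπ : IsPolicy π) (s' : S) :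
    dt M π s' = M.ρ0 s' + M.γ * ∑ s, ∑ a, dt M π s * π s a * M.p s a s' := by
  have hsum1 : ∀ s a, Summable (fun t => M.γ ^ t *
      (stateDistFrom M π M.ρ0 t s * π s a * M.p s a s')) := by
    intro s a
    apply summable_geom_mul M (B := π s a * M.p s a s')
    intro t
    rw [abs_mul, abs_mul, abs_of_nonneg (hπ.1 s a), abs_of_nonneg (M.p_nonneg s a s')]
    have h1 := abs_sdf_le_one M hπ (ρ0_dist M) t s
    calc |stateDistFrom M π M.ρ0 t s| * π s a * M.p s a s'
        ≤ 1 * π s a * M.p s a s' := by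
          apply mul_le_mul_of_nonneg_right _ (M.p_nonneg s a s')
          exact mul_le_mul_of_nonneg_right h1 (hπ.1 s a)
      _ = π s a * M.p s a s' := by ring
  have key : ∑ s, ∑ a, dt M π s * π s a * M.p s a s'
      = ∑' t, M.γ ^ t * stateDistFrom M π M.ρ0 (t + 1) s' := by
    calc ∑ s, ∑ a, dt M π s * π s a * M.p s a s'
        = ∑ s, ∑ a, ∑' t, M.γ ^ t * (stateDistFrom M π M.ρ0 t s * π s a * M.p s a s') := by
          refine Finset.sum_congr rfl fun s _ => Finset.sum_congr rfl fun a _ => ?_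
          rw [dt, ← tsum_mul_right, ← tsum_mul_right]
          exact tsum_congr fun t => by ring
      _ = ∑ s, ∑' t, ∑ a, M.γ ^ t * (stateDistFrom M π M.ρ0 t s * π s a * M.p s a s') := by
          exact Finset.sum_congr rfl fun s _ => (Summable.tsum_finsetSum (fun a _ => hsum1 s a)).symm
      _ = ∑' t, ∑ s, ∑ a, M.γ ^ t * (stateDistFrom M π M.ρ0 t s * π s a * M.p s a s') := by
          refine (Summable.tsum_finsetSum (fun s _ => ?_)).symm
          exact summable_sum (fun a _ => hsum1 s a)
      _ = ∑' t, M.γ ^ t * stateDistFrom M π M.ρ0 (t + 1) s' := by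
          refine tsum_congr fun t => ?_
          show _ = M.γ ^ t * ∑ s, ∑ a, stateDistFrom M π M.ρ0 t s * π s a * M.p s a s'
          rw [Finset.mul_sum]
          exact Finset.sum_congr rfl fun s _ => (Finset.mul_sum _ _ _).symm
  rw [key]
  have h0 := dt_summable M hπ s'
  have := Summable.tsum_eq_zero_add h0
  rw [dt, this]
  simp only [pow_zero, one_mul]
  show M.ρ0 s' + _ = _
  congr 1
  rw [← tsum_mul_left]
  exact tsum_congr fun t => by rw [pow_succ]; ring
end GPI

namespace GPI
variable {S A : Type*} [Fintype S] [Fintype A]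

lemma J_dt (M : MDP S A) {π : S → A → ℝ} (hπ : IsPolicy π) :
    Jfrom M π M.ρ0 = ∑ s, dt M π s * ∑ a, π s a * M.r s a := by
  have hsum : ∀ s : S, Summable (fun t => M.γ ^ t *
      (stateDistFrom M π M.ρ0 t s * ∑ a, π s a * M.r s a)) := by
    intro s
    apply summable_geom_mul M (B := |∑ a, π s a * M.r s a|)
    intro t
    rw [abs_mul]
    apply mul_le_mul_of_nonneg_right (abs_sdf_le_one M hπ (ρ0_dist M) t s) (abs_nonneg _)
      |>.trans_eq (one_mul _)
  calc Jfrom M π M.ρ0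
      = ∑' t, ∑ s, M.γ ^ t * (stateDistFrom M π M.ρ0 t s * ∑ a, π s a * M.r s a) := by
        refine tsum_congr fun t => ?_
        show (M.γ ^ t * ∑ s, ∑ a, stateDistFrom M π M.ρ0 t s * π s a * M.r s a) = _
        rw [Finset.mul_sum]
        refine Finset.sum_congr rfl fun s _ => ?_
        congr 1
        rw [Finset.mul_sum]
        exact Finset.sum_congr rfl fun a _ => by ring
    _ = ∑ s, ∑' t, M.γ ^ t * (stateDistFrom M π M.ρ0 t s * ∑ a, π s a * M.r s a) :=
        Summable.tsum_finsetSum (fun s _ => hsum s)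
    _ = ∑ s, dt M π s * ∑ a, π s a * M.r s a := by
        refine Finset.sum_congr rfl fun s _ => ?_
        rw [dt, ← tsum_mul_right]
        exact tsum_congr fun t => by ring
end GPI

namespace GPI
variable {S A : Type*} [Fintype S] [Fintype A]

/-- Performance difference lemma. -/
lemma pdl [DecidableEq S] (M : MDP S A) {π πk : S → A → ℝ} (hπ : IsPolicy π)
    (hπk : IsPolicy πk) :
    Jfrom M π M.ρ0 - Jfrom M πk M.ρ0
      = ∑ s, dt M π s *
          ∑ a, π s a * (M.r s a + M.γ * (∑ s', M.p s a s' * Vv M πk s') - Vv M πk s) := by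
  have hflow : ∀ s', M.γ * ∑ s, ∑ a, dt M π s * π s a * M.p s a s'
      = dt M π s' - M.ρ0 s' := by
    intro s'
    have h := dt_flow M hπ s'
    linarith
  have hB : ∑ s, dt M π s * ∑ a, π s a * (M.γ * (∑ s', M.p s a s' * Vv M πk s'))
      = ∑ s', (dt M π s' - M.ρ0 s') * Vv M πk s' := by
    calc ∑ s, dt M π s * ∑ a, π s a * (M.γ * (∑ s', M.p s a s' * Vv M πk s'))
        = ∑ s, ∑ a, ∑ s', M.γ * (dt M π s * π s a * M.p s a s') * Vv M πk s' := by
          simp only [Finset.mul_sum]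
          exact Finset.sum_congr rfl fun s _ => Finset.sum_congr rfl fun a _ =>
            Finset.sum_congr rfl fun s' _ => by ring
      _ = ∑ s', ∑ s, ∑ a, M.γ * (dt M π s * π s a * M.p s a s') * Vv M πk s' := sum_comm3 _
      _ = ∑ s', (M.γ * ∑ s, ∑ a, dt M π s * π s a * M.p s a s') * Vv M πk s' := by
          refine Finset.sum_congr rfl fun s' _ => ?_
          simp only [Finset.mul_sum, Finset.sum_mul]
      _ = ∑ s', (dt M π s' - M.ρ0 s') * Vv M πk s' :=
          Finset.sum_congr rfl fun s' _ => by rw [hflow s']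
  have hsplit : ∀ s, ∑ a, π s a * (M.r s a + M.γ * (∑ s', M.p s a s' * Vv M πk s') - Vv M πk s)
      = (∑ a, π s a * M.r s a)
        + (∑ a, π s a * (M.γ * (∑ s', M.p s a s' * Vv M πk s'))) - Vv M πk s := by
    intro s
    have h : ∀ a, π s a * (M.r s a + M.γ * (∑ s', M.p s a s' * Vv M πk s') - Vv M πk s)
        = π s a * M.r s a + π s a * (M.γ * (∑ s', M.p s a s' * Vv M πk s'))
          - π s a * Vv M πk s := fun a => by ring
    simp_rw [h]
    rw [Finset.sum_sub_distrib, Finset.sum_add_distrib, ← Finset.sum_mul, hπ.2 s, one_mul]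
  calc Jfrom M π M.ρ0 - Jfrom M πk M.ρ0
      = Jfrom M π M.ρ0 - ∑ s, M.ρ0 s * Vv M πk s := by
        rw [Jfrom_linear M hπk M.ρ0]
    _ = (∑ s, dt M π s * ∑ a, π s a * M.r s a)
        + (∑ s', (dt M π s' - M.ρ0 s') * Vv M πk s')
        - ∑ s, dt M π s * Vv M πk s := by
        rw [J_dt M hπ]
        have expand : ∑ s', (dt M π s' - M.ρ0 s') * Vv M πk s'
            = ∑ s, dt M π s * Vv M πk s - ∑ s, M.ρ0 s * Vv M πk s := by
          rw [← Finset.sum_sub_distrib]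
          exact Finset.sum_congr rfl fun s _ => by ring
        rw [expand]; ring
    _ = ∑ s, dt M π s *
          ∑ a, π s a * (M.r s a + M.γ * (∑ s', M.p s a s' * Vv M πk s') - Vv M πk s) := by
        rw [← hB]
        simp_rw [hsplit, mul_sub, mul_add]
        rw [Finset.sum_sub_distrib, Finset.sum_add_distrib]
end GPI

namespace GPI
variable {S A : Type*} [Fintype S] [Fintype A]

lemma dt_shift (M : MDP S A) {π π' : S → A → ℝ} (hπ : IsPolicy π) (hπ' : IsPolicy π') :
    (1 - M.γ) * ∑ s, |dt M π s - dt M π' s|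
      ≤ M.γ * ∑ s, dt M π' s * ∑ a, |π s a - π' s a| := by
  have hpt : ∀ s', |dt M π s' - dt M π' s'|
      ≤ M.γ * ∑ s, ∑ a, (|dt M π s - dt M π' s| * π s a
          + dt M π' s * |π s a - π' s a|) * M.p s a s' := by
    intro s'
    have e : dt M π s' - dt M π' s'
        = M.γ * ∑ s, ∑ a, ((dt M π s - dt M π' s) * π s a
            + dt M π' s * (π s a - π' s a)) * M.p s a s' := by
      rw [dt_flow M hπ s', dt_flow M hπ' s']
      have h : ∑ s, ∑ a, ((dt M π s - dt M π' s) * π s a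
            + dt M π' s * (π s a - π' s a)) * M.p s a s'
          = (∑ s, ∑ a, dt M π s * π s a * M.p s a s')
            - ∑ s, ∑ a, dt M π' s * π' s a * M.p s a s' := by
        rw [← Finset.sum_sub_distrib]
        refine Finset.sum_congr rfl fun s _ => ?_
        rw [← Finset.sum_sub_distrib]
        exact Finset.sum_congr rfl fun a _ => by ring
      rw [h]; ring
    rw [e, abs_mul, abs_of_pos M.γ_pos]
    refine mul_le_mul_of_nonneg_left ?_ (γ_nonneg M)
    calc |∑ s, ∑ a, ((dt M π s - dt M π' s) * π s a
            + dt M π' s * (π s a - π' s a)) * M.p s a s'|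
        ≤ ∑ s, ∑ a, |((dt M π s - dt M π' s) * π s a
            + dt M π' s * (π s a - π' s a)) * M.p s a s'| :=
          (Finset.abs_sum_le_sum_abs _ _).trans
            (Finset.sum_le_sum fun s _ => Finset.abs_sum_le_sum_abs _ _)
      _ ≤ ∑ s, ∑ a, (|dt M π s - dt M π' s| * π s a
            + dt M π' s * |π s a - π' s a|) * M.p s a s' := by
          refine Finset.sum_le_sum fun s _ => Finset.sum_le_sum fun a _ => ?_
          rw [abs_mul, abs_of_nonneg (M.p_nonneg s a s')]
          refine mul_le_mul_of_nonneg_right ?_ (M.p_nonneg s a s')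
          calc |(dt M π s - dt M π' s) * π s a + dt M π' s * (π s a - π' s a)|
              ≤ |(dt M π s - dt M π' s) * π s a| + |dt M π' s * (π s a - π' s a)| :=
                abs_add_le _ _
            _ = |dt M π s - dt M π' s| * π s a + dt M π' s * |π s a - π' s a| := by
                rw [abs_mul, abs_mul, abs_of_nonneg (hπ.1 s a),
                  abs_of_nonneg (dt_nonneg M hπ' s)]
  have hsum : ∑ s', |dt M π s' - dt M π' s'|
      ≤ M.γ * (∑ s, |dt M π s - dt M π' s|
          + ∑ s, dt M π' s * ∑ a, |π s a - π' s a|) := by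
    calc ∑ s', |dt M π s' - dt M π' s'|
        ≤ ∑ s', M.γ * ∑ s, ∑ a, (|dt M π s - dt M π' s| * π s a
            + dt M π' s * |π s a - π' s a|) * M.p s a s' :=
          Finset.sum_le_sum fun s' _ => hpt s'
      _ = M.γ * ∑ s', ∑ s, ∑ a, (|dt M π s - dt M π' s| * π s a
            + dt M π' s * |π s a - π' s a|) * M.p s a s' := by rw [Finset.mul_sum]
      _ = M.γ * ∑ s, ∑ a, (|dt M π s - dt M π' s| * π s a
            + dt M π' s * |π s a - π' s a|) := by
          congr 1
          calc ∑ s', ∑ s, ∑ a, (|dt M π s - dt M π' s| * π s a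
                + dt M π' s * |π s a - π' s a|) * M.p s a s'
              = ∑ s, ∑ a, ∑ s', (|dt M π s - dt M π' s| * π s a
                + dt M π' s * |π s a - π' s a|) * M.p s a s' := by
                rw [sum_comm3 (fun s a s' => (|dt M π s - dt M π' s| * π s a
                  + dt M π' s * |π s a - π' s a|) * M.p s a s')]
            _ = ∑ s, ∑ a, (|dt M π s - dt M π' s| * π s a
                + dt M π' s * |π s a - π' s a|) := by
                refine Finset.sum_congr rfl fun s _ => Finset.sum_congr rfl fun a _ => ?_
                rw [← Finset.mul_sum, M.p_sum, mul_one]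
      _ = M.γ * (∑ s, |dt M π s - dt M π' s|
            + ∑ s, dt M π' s * ∑ a, |π s a - π' s a|) := by
          congr 1
          rw [← Finset.sum_add_distrib]
          refine Finset.sum_congr rfl fun s _ => ?_
          rw [Finset.sum_add_distrib, ← Finset.mul_sum, ← Finset.mul_sum, hπ.2 s, mul_one]
  nlinarith [hsum]
end GPI

namespace GPI
variable {S A : Type*} [Fintype S] [Fintype A]

/-- Single-reference-policy lower bound, in unnormalized (dt) form. -/
lemma key_bound [DecidableEq S] [Nonempty S] (M : MDP S A) {π πk π' : S → A → ℝ}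
    (hπ : IsPolicy π) (hπk : IsPolicy πk) (hπ' : IsPolicy π') :
    Jval M π - Jval M πk
      ≥ (∑ s, dt M π' s * ∑ a, π s a * Adv M πk s a)
        - (2 * M.γ * (⨆ s, |∑ a, π s a * Adv M πk s a|) / (1 - M.γ)) *
            ∑ s, dt M π' s * tvPol π (π') s := by
  set Abar : S → ℝ := fun s => ∑ a, π s a * Adv M πk s a with hAbar
  set C : ℝ := ⨆ s, |Abar s| with hC
  have hbdd : BddAbove (Set.range fun s => |Abar s|) :=
    Set.Finite.bddAbove (Set.finite_range _)
  have hCb : ∀ s, |Abar s| ≤ C := fun s => le_ciSup hbdd s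
  have hC0 : 0 ≤ C := le_trans (abs_nonneg _) (hCb (Classical.arbitrary S))
  have hγ : (0:ℝ) < 1 - M.γ := one_sub_γ_pos M
  have hAdv : ∀ s a, Adv M πk s a
      = M.r s a + M.γ * (∑ s', M.p s a s' * Vv M πk s') - Vv M πk s := fun s a => rfl
  have hpdl : Jval M π - Jval M πk = ∑ s, dt M π s * Abar s := by
    have := pdl M hπ hπk
    simp only [hAbar, hAdv]
    exact this
  set Y : ℝ := ∑ s, dt M π s * Abar s with hY
  set Sv : ℝ := ∑ s, dt M π' s * Abar s with hSv
  set X : ℝ := ∑ s, |dt M π s - dt M π' s| with hX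
  set T : ℝ := ∑ s, dt M π' s * tvPol π π' s with hT
  have hT0 : 0 ≤ T := Finset.sum_nonneg fun s _ => mul_nonneg (dt_nonneg M hπ' s)
    (mul_nonneg (by norm_num) (Finset.sum_nonneg fun a _ => abs_nonneg _))
  have h1 : Sv - Y ≤ C * X := by
    rw [hSv, hY, hX, ← Finset.sum_sub_distrib, Finset.mul_sum]
    refine Finset.sum_le_sum fun s _ => ?_
    calc dt M π' s * Abar s - dt M π s * Abar s
        = (dt M π' s - dt M π s) * Abar s := by ring
      _ ≤ |(dt M π' s - dt M π s) * Abar s| := le_abs_self _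
      _ = |dt M π s - dt M π' s| * |Abar s| := by rw [abs_mul, abs_sub_comm]
      _ ≤ |dt M π s - dt M π' s| * C := mul_le_mul_of_nonneg_left (hCb s) (abs_nonneg _)
      _ = C * |dt M π s - dt M π' s| := mul_comm _ _
  have h2 : (1 - M.γ) * X ≤ M.γ * (2 * T) := by
    have hs := dt_shift M hπ hπ'
    have htv : ∑ s, dt M π' s * ∑ a, |π s a - π' s a| = 2 * T := by
      rw [hT, Finset.mul_sum]
      refine Finset.sum_congr rfl fun s _ => ?_
      rw [tvPol]; ring
    rw [htv] at hs
    exact hs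
  have h3 : C * ((1 - M.γ) * X) ≤ C * (M.γ * (2 * T)) := mul_le_mul_of_nonneg_left h2 hC0
  have h4 : (Sv - Y) * (1 - M.γ) ≤ 2 * M.γ * C * T := by
    have h5 : (Sv - Y) * (1 - M.γ) ≤ (C * X) * (1 - M.γ) :=
      mul_le_mul_of_nonneg_right h1 hγ.le
    nlinarith [h3, h5]
  have h6 : Sv - Y ≤ 2 * M.γ * C * T / (1 - M.γ) := (le_div_iff₀ hγ).mpr h4
  have h7 : 2 * M.γ * C / (1 - M.γ) * T = 2 * M.γ * C * T / (1 - M.γ) := by ring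
  rw [ge_iff_le, hpdl]
  calc Sv - 2 * M.γ * C / (1 - M.γ) * T ≤ Sv - (Sv - Y) := by rw [h7]; linarith
    _ = Y := by ring
end GPI


/-- Generalized policy improvement lower bound over `Mp` prior policies:
for prior policies `πp i`, `i = 0,…,Mp-1` with `πp 0 = π_k`, weights `ν`, and any future
policy `π` whose support is contained in that of every `πp i`,
`J(π) - J(π_k) ≥ (1/(1-γ)) E_{i∼ν} E_{(s,a)∼d^{πp i}}[(π/πp i) A^{π_k}]
  - (2γ C^{π,π_k}/(1-γ)^2) E_{i∼ν} E_{s∼d^{πp i}}[TV(π, πp i)(s)]`. -/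
theorem generalized_policy_improvement_lower_bound [DecidableEq S] [Nonempty S]
    (M : MDP S A) (Mp : ℕ) (hMp : 0 < Mp)
    (π πk : S → A → ℝ) (πp : ℕ → S → A → ℝ)
    (hπ : IsPolicy π) (hπk : IsPolicy πk)
    (hπp : ∀ i < Mp, IsPolicy (πp i)) (hπp0 : πp 0 = πk)
    (ν : ℕ → ℝ) (hν0 : ∀ i, 0 ≤ ν i) (hν1 : ∑ i ∈ Finset.range Mp, ν i = 1)
    (hsupp : ∀ i < Mp, ∀ s a, π s a ≠ 0 → πp i s a ≠ 0) :
    Jval M π - Jval M πk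
      ≥ (1 / (1 - M.γ)) *
          (∑ i ∈ Finset.range Mp, ν i *
            ∑ s, ∑ a, (visit M (πp i) s * πp i s a) * ((π s a / πp i s a) * Adv M πk s a))
        - (2 * M.γ * (⨆ s, |∑ a, π s a * Adv M πk s a|) / (1 - M.γ) ^ 2) *
            ∑ i ∈ Finset.range Mp, ν i * ∑ s, visit M (πp i) s * tvPol π (πp i) s := by
  classical
  set C : ℝ := ⨆ s, |∑ a, π s a * Adv M πk s a| with hC
  have hγ : (0:ℝ) < 1 - M.γ := GPI.one_sub_γ_pos M
  have hγne : (1 - M.γ) ≠ 0 := ne_of_gt hγ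
  have hvisit : ∀ (p : S → A → ℝ) (s : S), visit M p s = (1 - M.γ) * GPI.dt M p s :=
    fun p s => rfl
  -- Rewrite the importance-sampling term
  have hT1 : ∀ i ∈ Finset.range Mp,
      ∑ s, ∑ a, (visit M (πp i) s * πp i s a) * ((π s a / πp i s a) * Adv M πk s a)
        = (1 - M.γ) * ∑ s, GPI.dt M (πp i) s * ∑ a, π s a * Adv M πk s a := by
    intro i hi
    rw [Finset.mul_sum]
    refine Finset.sum_congr rfl fun s _ => ?_
    rw [hvisit, Finset.mul_sum, Finset.mul_sum]
    refine Finset.sum_congr rfl fun a _ => ?_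
    by_cases h : πp i s a = 0
    · have hπ0 : π s a = 0 := by
        by_contra hne
        exact hsupp i (Finset.mem_range.mp hi) s a hne h
      simp [h, hπ0]
    · field_simp
  have hT2 : ∀ i, ∑ s, visit M (πp i) s * tvPol π (πp i) s
      = (1 - M.γ) * ∑ s, GPI.dt M (πp i) s * tvPol π (πp i) s := by
    intro i
    rw [Finset.mul_sum]
    exact Finset.sum_congr rfl fun s _ => by rw [hvisit]; ring
  have key : ∀ i ∈ Finset.range Mp,
      (∑ s, GPI.dt M (πp i) s * ∑ a, π s a * Adv M πk s a)
        - (2 * M.γ * C / (1 - M.γ)) * ∑ s, GPI.dt M (πp i) s * tvPol π (πp i) s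
        ≤ Jval M π - Jval M πk := by
    intro i hi
    exact GPI.key_bound M hπ hπk (hπp i (Finset.mem_range.mp hi))
  -- rewrite RHS
  have eRHS : (1 / (1 - M.γ)) *
          (∑ i ∈ Finset.range Mp, ν i *
            ∑ s, ∑ a, (visit M (πp i) s * πp i s a) * ((π s a / πp i s a) * Adv M πk s a))
        - (2 * M.γ * C / (1 - M.γ) ^ 2) *
            ∑ i ∈ Finset.range Mp, ν i * ∑ s, visit M (πp i) s * tvPol π (πp i) s
      = ∑ i ∈ Finset.range Mp, ν i *
          ((∑ s, GPI.dt M (πp i) s * ∑ a, π s a * Adv M πk s a)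
            - (2 * M.γ * C / (1 - M.γ)) * ∑ s, GPI.dt M (πp i) s * tvPol π (πp i) s) := by
    rw [Finset.mul_sum, Finset.mul_sum]
    rw [← Finset.sum_sub_distrib]
    refine Finset.sum_congr rfl fun i hi => ?_
    rw [hT1 i hi, hT2 i]
    field_simp
  rw [ge_iff_le, eRHS]
  calc ∑ i ∈ Finset.range Mp, ν i *
          ((∑ s, GPI.dt M (πp i) s * ∑ a, π s a * Adv M πk s a)
            - (2 * M.γ * C / (1 - M.γ)) * ∑ s, GPI.dt M (πp i) s * tvPol π (πp i) s)
      ≤ ∑ i ∈ Finset.range Mp, ν i * (Jval M π - Jval M πk) :=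
        Finset.sum_le_sum fun i hi => mul_le_mul_of_nonneg_left (key i hi) (hν0 i)
    _ = Jval M π - Jval M πk := by rw [← Finset.sum_mul, hν1, one_mul]
end
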